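/- arXiv:1504.02063 — 6 statements merged into one kernel-verified Lean document; each statement's English description precedes it below -/
import Mathlib

section
/- Let ε > 0 and K > 0, and let (r_n), (d_n) be sequences of positive integers with 1 ≤ r_n ≤ n/2, such that r_n ≤ n^{1−ε} and d_n ≥ K · log₂ n for all sufficiently large n. Then there exists a sequence (c_n), where c_n is a non-adaptive (r_n,d_n,n)-locally decodable source code, that is competitively optimal, i.e. limsup_{n→∞} E[ℓ(c_n(X^n))] / log₂ C(n,r_n) < ∞. -/
open Filter MeasureTheory

/-- A binary decision tree: internal nodes probe a (1-indexed) position of the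
codeword, leaves output a bit. -/
inductive DTree : Type
  | leaf (b : Bool) : DTree
  | node (pos : ℕ) (lo hi : DTree) : DTree

namespace DTree

/-- Depth of a decision tree. -/
def depth : DTree → ℕ
  | leaf _ => 0
  | node _ l h => 1 + max l.depth h.depth

/-- All probed positions lie in `{1, …, ℓ}`. -/
def boundedBy (ℓ : ℕ) : DTree → Prop
  | leaf _ => True
  | node p l h => 1 ≤ p ∧ p ≤ ℓ ∧ l.boundedBy ℓ ∧ h.boundedBy ℓ

/-- Evaluate the tree on a codeword `w` (positions are 1-indexed). -/
def eval (w : List Bool) : DTree → Bool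
  | leaf b => b
  | node p l h => if w.getD (p - 1) false then h.eval w else l.eval w

end DTree

/-- `x : Fin n → Bool` has exactly `r` ones. -/
def Sparse (n r : ℕ) (x : Fin n → Bool) : Prop :=
  (Finset.univ.filter fun i => x i = true).card = r

instance (n r : ℕ) : DecidablePred (Sparse n r) := fun _ => Nat.decEq _ r

/-- The type of `r`-sparse binary vectors of length `n`. -/
abbrev SparseVec (n r : ℕ) := {x : Fin n → Bool // Sparse n r x}

/-- A non-adaptive `(r,d,n)`-locally decodable source code. -/
structure NonAdaptiveLDC (r d n : ℕ) where
  enc : SparseVec n r → List Bool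
  enc_inj : Function.Injective enc
  S : Fin n → ℕ → Finset ℕ
  S_sub : ∀ j ℓ, S j ℓ ⊆ Finset.Icc 1 ℓ
  S_card : ∀ j ℓ, (S j ℓ).card ≤ d
  g : Fin n → ℕ → (ℕ → Bool) → Bool
  g_local : ∀ j ℓ f f', (∀ i ∈ S j ℓ, f i = f' i) → g j ℓ f = g j ℓ f'
  correct : ∀ x (j : Fin n),
    g j (enc x).length (fun i => (enc x).getD (i - 1) false) = x.1 j

/-- Expected codeword length under the uniform distribution on `r`-sparse vectors. -/
noncomputable def expLenN {r d n : ℕ} (c : NonAdaptiveLDC r d n) : ℝ :=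
  (∑ x : SparseVec n r, ((c.enc x).length : ℝ)) / (n.choose r : ℝ)

namespace LDCAux

/-- Trivial zero-probe code: the length of the codeword encodes the vector. -/
noncomputable def trivialCode (r d n : ℕ) : NonAdaptiveLDC r d n :=
  let e := Fintype.equivFin (SparseVec n r)
  { enc := fun x => List.replicate (e x).1 true
    enc_inj := by
      intro a b h
      have h' : (e a).1 = (e b).1 := by simpa using congrArg List.length h
      exact e.injective (Fin.ext h')
    S := fun _ _ => ∅
    S_sub := fun _ _ => by simp
    S_card := fun _ _ => by simp
    g := fun j ℓ _ => if h : ℓ < Fintype.card (SparseVec n r) then (e.symm ⟨ℓ, h⟩).1 j else false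
    g_local := fun _ _ _ _ _ => rfl
    correct := by
      intro x j
      simp only [List.length_replicate]
      rw [dif_pos (e x).isLt]
      simp }


/-- Greedy halving: if for every `b` at least half of `α` is good for `b`,
then some list of `k` elements of `α` covers any family of fewer than `2^k` many `b`'s. -/
theorem exists_cover_list {α β : Type*} [Fintype α] [Nonempty α] (G : α → β → Prop)
    [∀ a b, Decidable (G a b)] :
    ∀ (k : ℕ) (X : Finset β),
      (∀ b ∈ X, 2 * (Finset.univ.filter fun a => ¬ G a b).card ≤ Fintype.card α) →
      X.card < 2 ^ k → ∃ L : List α, L.length ≤ k ∧ ∀ b ∈ X, ∃ a ∈ L, G a b := by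
  intro k
  induction k with
  | zero =>
    intro X _ hcard
    refine ⟨[], by simp, ?_⟩
    rw [pow_zero] at hcard
    have hX : X = ∅ := Finset.card_eq_zero.mp (by omega)
    simp [hX]
  | succ k ih =>
    intro X hbal hcard
    have key : ∃ a : α, 2 * (X.filter fun b => ¬ G a b).card ≤ X.card := by
      by_contra hcon
      push_neg at hcon
      have h1 : ∑ _a : α, (X.card + 1) ≤ ∑ a : α, 2 * (X.filter fun b => ¬ G a b).card :=
        Finset.sum_le_sum fun a _ => by have := hcon a; omega
      have hswap : ∑ a : α, (X.filter fun b => ¬ G a b).card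
          = ∑ b ∈ X, (Finset.univ.filter fun a => ¬ G a b).card := by
        simp only [Finset.card_filter]
        exact Finset.sum_comm
      have h2 : ∑ b ∈ X, 2 * (Finset.univ.filter fun a => ¬ G a b).card
          ≤ ∑ _b ∈ X, Fintype.card α :=
        Finset.sum_le_sum fun b hb => hbal b hb
      have h4 : ∑ a : α, 2 * (X.filter fun b => ¬ G a b).card
          = ∑ b ∈ X, 2 * (Finset.univ.filter fun a => ¬ G a b).card := by
        rw [← Finset.mul_sum, ← Finset.mul_sum, hswap]
      rw [Finset.sum_const, smul_eq_mul, Finset.card_univ] at h1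
      rw [Finset.sum_const, smul_eq_mul] at h2
      rw [h4] at h1
      have h5 := h1.trans h2
      have h6 : 0 < Fintype.card α := Fintype.card_pos
      nlinarith
    obtain ⟨a, ha⟩ := key
    have hlt : (X.filter fun b => ¬ G a b).card < 2 ^ k := by
      have : (2:ℕ) ^ (k+1) = 2 * 2 ^ k := by ring
      omega
    obtain ⟨L, hL, hcov⟩ := ih (X.filter fun b => ¬ G a b)
      (fun b hb => hbal b (Finset.mem_filter.mp hb).1) hlt
    refine ⟨a :: L, by simpa using hL, ?_⟩
    intro b hb
    by_cases hg : G a b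
    · exact ⟨a, List.mem_cons_self, hg⟩
    · obtain ⟨a', ha'1, ha'2⟩ := hcov b (Finset.mem_filter.mpr ⟨hb, hg⟩)
      exact ⟨a', List.mem_cons_of_mem a ha'1, ha'2⟩

variable {n r t m : ℕ}

def Xset (x : SparseVec n r) : Finset (Fin n) := Finset.univ.filter fun i => x.1 i = true

lemma card_Xset (x : SparseVec n r) : (Xset x).card = r := x.2

def Bset (σ : Fin t → Fin n → Fin m) (x : SparseVec n r) : Finset (Fin m) :=
  (Finset.univ ×ˢ Xset x).image fun p => σ p.1 p.2

lemma mem_Bset {σ : Fin t → Fin n → Fin m} {x : SparseVec n r} {j : Fin n}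
    (hj : x.1 j = true) (i : Fin t) : σ i j ∈ Bset σ x :=
  Finset.mem_image.2 ⟨(i, j), Finset.mem_product.2
    ⟨Finset.mem_univ _, Finset.mem_filter.2 ⟨Finset.mem_univ _, hj⟩⟩, rfl⟩

lemma card_Bset_le (σ : Fin t → Fin n → Fin m) (x : SparseVec n r) :
    (Bset σ x).card ≤ t * r := by
  calc (Bset σ x).card ≤ (Finset.univ ×ˢ Xset x).card := Finset.card_image_le
  _ = t * r := by rw [Finset.card_product, card_Xset]; simp

def Good (σ : Fin t → Fin n → Fin m) (x : SparseVec n r) : Prop :=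
  ∀ j : Fin n, x.1 j = false → ∃ i, σ i j ∉ Bset σ x

instance (σ : Fin t → Fin n → Fin m) (x : SparseVec n r) : Decidable (Good σ x) := by
  unfold Good; infer_instance

def modify (j : Fin n) (σ : Fin t → Fin n → Fin m) (p : Fin t → Fin m) :
    Fin t → Fin n → Fin m := fun i => Function.update (σ i) j (p i)

lemma Bset_modify {x : SparseVec n r} {j : Fin n} (hj : x.1 j = false)
    (σ : Fin t → Fin n → Fin m) (p : Fin t → Fin m) : Bset (modify j σ p) x = Bset σ x := by
  unfold Bset
  apply Finset.image_congr
  intro q hq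
  simp only [Finset.coe_product, Set.mem_prod, Finset.mem_coe, Xset, Finset.mem_filter] at hq
  have hqj : q.2 ≠ j := by
    intro h
    rw [h] at hq
    rw [hq.2.2] at hj
    exact Bool.noConfusion hj
  simp [modify, Function.update_of_ne hqj]

def splitEquiv (j : Fin n) (z : Fin m) :
    (Fin t → Fin n → Fin m) ≃ {τ : Fin t → Fin n → Fin m // ∀ i, τ i j = z} × (Fin t → Fin m) where
  toFun σ := (⟨modify j σ fun _ => z, fun i => Function.update_self _ _ _⟩, fun i => σ i j)
  invFun y := modify j y.1.1 y.2
  left_inv σ := by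
    funext i k
    rcases eq_or_ne k j with rfl | hk
    · simp [modify]
    · simp [modify, Function.update_of_ne hk]
  right_inv y := by
    refine Prod.ext ?_ ?_
    · apply Subtype.ext; funext i k
      rcases eq_or_ne k j with rfl | hk
      · simpa [modify] using (y.1.2 i).symm
      · simp [modify, Function.update_of_ne hk]
    · funext i; simp [modify]

lemma card_badj (x : SparseVec n r) (j : Fin n) (hj : x.1 j = false) (hm : 0 < m) :
    (Finset.univ.filter fun σ : Fin t → Fin n → Fin m => ∀ i, σ i j ∈ Bset σ x).card * m ^ t
      ≤ Fintype.card (Fin t → Fin n → Fin m) * (t * r) ^ t := by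
  classical
  set z : Fin m := ⟨0, hm⟩
  set e := splitEquiv (t := t) j z with he
  -- transfer to the product side
  have h1 : (Finset.univ.filter fun σ : Fin t → Fin n → Fin m => ∀ i, σ i j ∈ Bset σ x).card
      = (Finset.univ.filter
          (fun y : {τ : Fin t → Fin n → Fin m // ∀ i, τ i j = z} × (Fin t → Fin m) =>
            ∀ i, y.2 i ∈ Bset y.1.1 x)).card := by
    rw [← Fintype.card_subtype, ← Fintype.card_subtype]
    apply Fintype.card_congr
    apply Equiv.subtypeEquiv e
    intro σ
    constructor
    · intro h i
      show σ i j ∈ Bset (modify j σ fun _ => z) x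
      rw [Bset_modify hj]
      exact h i
    · intro h i
      have hh : σ i j ∈ Bset (modify j σ fun _ => z) x := h i
      rwa [Bset_modify hj] at hh
  rw [h1]
  -- bound the product side by a biUnion
  have h2 : (Finset.univ.filter
        (fun y : {τ : Fin t → Fin n → Fin m // ∀ i, τ i j = z} × (Fin t → Fin m) =>
          ∀ i, y.2 i ∈ Bset y.1.1 x)).card
      ≤ Fintype.card {τ : Fin t → Fin n → Fin m // ∀ i, τ i j = z} * (t * r) ^ t := by
    have hsub : (Finset.univ.filter
        (fun y : {τ : Fin t → Fin n → Fin m // ∀ i, τ i j = z} × (Fin t → Fin m) =>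
          ∀ i, y.2 i ∈ Bset y.1.1 x))
        ⊆ Finset.univ.biUnion (fun τ : {τ : Fin t → Fin n → Fin m // ∀ i, τ i j = z} =>
            ({τ} : Finset _) ×ˢ Fintype.piFinset fun _ : Fin t => Bset τ.1 x) := by
      intro y hy
      simp only [Finset.mem_filter, Finset.mem_univ, true_and] at hy
      apply Finset.mem_biUnion.2
      refine ⟨y.1, Finset.mem_univ _, ?_⟩
      apply Finset.mem_product.2
      exact ⟨Finset.mem_singleton_self _, Fintype.mem_piFinset.2 hy⟩
    calc _ ≤ _ := Finset.card_le_card hsub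
    _ ≤ ∑ τ : {τ : Fin t → Fin n → Fin m // ∀ i, τ i j = z},
          (({τ} : Finset _) ×ˢ Fintype.piFinset fun _ : Fin t => Bset τ.1 x).card :=
        Finset.card_biUnion_le
    _ ≤ ∑ _τ : {τ : Fin t → Fin n → Fin m // ∀ i, τ i j = z}, (t * r) ^ t := by
        apply Finset.sum_le_sum
        intro τ _
        rw [Finset.card_product, Finset.card_singleton, one_mul, Fintype.card_piFinset]
        calc ∏ _i : Fin t, (Bset τ.1 x).card = (Bset τ.1 x).card ^ t := by
              rw [Finset.prod_const, Finset.card_univ, Fintype.card_fin]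
        _ ≤ (t * r) ^ t := Nat.pow_le_pow_left (card_Bset_le _ _) t
    _ = Fintype.card {τ : Fin t → Fin n → Fin m // ∀ i, τ i j = z} * (t * r) ^ t := by
        rw [Finset.sum_const, smul_eq_mul, Finset.card_univ]
  -- the total count
  have h3 : Fintype.card (Fin t → Fin n → Fin m)
      = Fintype.card {τ : Fin t → Fin n → Fin m // ∀ i, τ i j = z} * m ^ t := by
    rw [Fintype.card_congr e, Fintype.card_prod, Fintype.card_fun, Fintype.card_fin,
      Fintype.card_fin]
  rw [h3]
  calc _ ≤ (Fintype.card {τ : Fin t → Fin n → Fin m // ∀ i, τ i j = z} * (t * r) ^ t) * m ^ t :=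
      Nat.mul_le_mul_right _ h2
  _ = Fintype.card {τ : Fin t → Fin n → Fin m // ∀ i, τ i j = z} * m ^ t * (t * r) ^ t := by ring

lemma card_bad_le (x : SparseVec n r) (hm : 0 < m)
    (hcount : 2 * (n * (t * r) ^ t) ≤ m ^ t) :
    2 * (Finset.univ.filter fun σ : Fin t → Fin n → Fin m => ¬ Good σ x).card
      ≤ Fintype.card (Fin t → Fin n → Fin m) := by
  classical
  set S := Fintype.card (Fin t → Fin n → Fin m) with hS
  have hsub : (Finset.univ.filter fun σ : Fin t → Fin n → Fin m => ¬ Good σ x)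
      ⊆ (Finset.univ.filter fun j : Fin n => x.1 j = false).biUnion
          (fun j => Finset.univ.filter fun σ : Fin t → Fin n → Fin m => ∀ i, σ i j ∈ Bset σ x) := by
    intro σ hσ
    simp only [Finset.mem_filter, Finset.mem_univ, true_and] at hσ
    unfold Good at hσ
    push_neg at hσ
    obtain ⟨j, hj1, hj2⟩ := hσ
    exact Finset.mem_biUnion.2 ⟨j, by simp [hj1], by simp [hj2]⟩
  have h1 : (Finset.univ.filter fun σ : Fin t → Fin n → Fin m => ¬ Good σ x).card * m ^ t
      ≤ n * (S * (t * r) ^ t) := by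
    calc (Finset.univ.filter fun σ : Fin t → Fin n → Fin m => ¬ Good σ x).card * m ^ t
        ≤ (∑ j ∈ Finset.univ.filter fun j : Fin n => x.1 j = false,
            (Finset.univ.filter fun σ : Fin t → Fin n → Fin m =>
              ∀ i, σ i j ∈ Bset σ x).card) * m ^ t := by
          exact Nat.mul_le_mul_right _ ((Finset.card_le_card hsub).trans Finset.card_biUnion_le)
    _ = ∑ j ∈ Finset.univ.filter fun j : Fin n => x.1 j = false,
          ((Finset.univ.filter fun σ : Fin t → Fin n → Fin m =>
            ∀ i, σ i j ∈ Bset σ x).card * m ^ t) := by rw [Finset.sum_mul]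
    _ ≤ ∑ j ∈ Finset.univ.filter fun j : Fin n => x.1 j = false, S * (t * r) ^ t := by
        apply Finset.sum_le_sum
        intro j hj
        exact card_badj x j (Finset.mem_filter.mp hj).2 hm
    _ = (Finset.univ.filter fun j : Fin n => x.1 j = false).card * (S * (t * r) ^ t) := by
        rw [Finset.sum_const, smul_eq_mul]
    _ ≤ n * (S * (t * r) ^ t) := by
        apply Nat.mul_le_mul_right
        calc (Finset.univ.filter fun j : Fin n => x.1 j = false).card
            ≤ Finset.univ.card := Finset.card_filter_le _ _
        _ = n := by simp
  have h2 : (2 * (Finset.univ.filter fun σ : Fin t → Fin n → Fin m => ¬ Good σ x).card) * m ^ t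
      ≤ S * m ^ t := by
    calc (2 * (Finset.univ.filter fun σ : Fin t → Fin n → Fin m => ¬ Good σ x).card) * m ^ t
        = 2 * ((Finset.univ.filter fun σ : Fin t → Fin n → Fin m => ¬ Good σ x).card * m ^ t) := by
          ring
    _ ≤ 2 * (n * (S * (t * r) ^ t)) := Nat.mul_le_mul_left _ h1
    _ = (2 * (n * (t * r) ^ t)) * S := by ring
    _ ≤ m ^ t * S := Nat.mul_le_mul_right _ hcount
    _ = S * m ^ t := by ring
  exact Nat.le_of_mul_le_mul_right h2 (Nat.pow_pos hm)

lemma exists_family (hm : 0 < m) (hcount : 2 * (n * (t * r) ^ t) ≤ m ^ t) :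
    ∃ L : List (Fin t → Fin n → Fin m),
      L.length ≤ Nat.log 2 (Fintype.card (SparseVec n r)) + 1 ∧
        ∀ x : SparseVec n r, ∃ σ ∈ L, Good σ x := by
  haveI : Nonempty (Fin t → Fin n → Fin m) := ⟨fun _ _ => ⟨0, hm⟩⟩
  obtain ⟨L, h1, h2⟩ := exists_cover_list (Good (t := t) (n := n) (m := m) (r := r))
    (Nat.log 2 (Fintype.card (SparseVec n r)) + 1) Finset.univ
    (fun x _ => card_bad_le x hm hcount)
    (by rw [Finset.card_univ]; exact Nat.lt_pow_succ_log_self (by norm_num) _)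
  exact ⟨L, h1, fun x => h2 x (Finset.mem_univ x)⟩

section Code

variable {n r d t m : ℕ}

lemma exists_idx (L : List (Fin t → Fin n → Fin m))
    (hL : ∀ x : SparseVec n r, ∃ σ ∈ L, Good σ x) (x : SparseVec n r) :
    ∃ q : Fin L.length, Good (L.get q) x := by
  obtain ⟨σ, hσL, hσ⟩ := hL x
  obtain ⟨q, hq⟩ := List.mem_iff_get.mp hσL
  exact ⟨q, by rwa [hq]⟩

noncomputable def qf (L : List (Fin t → Fin n → Fin m))
    (hL : ∀ x : SparseVec n r, ∃ σ ∈ L, Good σ x) (x : SparseVec n r) : Fin L.length :=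
  (exists_idx L hL x).choose

lemma qf_spec (L : List (Fin t → Fin n → Fin m))
    (hL : ∀ x : SparseVec n r, ∃ σ ∈ L, Good σ x) (x : SparseVec n r) :
    Good (L.get (qf L hL x)) x := (exists_idx L hL x).choose_spec

noncomputable def dec (hm : 0 < m) (L : List (Fin t → Fin n → Fin m)) (ℓ : ℕ) :
    Fin t → Fin n → Fin m :=
  if h : ℓ - (m + 1) < L.length then L.get ⟨ℓ - (m + 1), h⟩ else fun _ _ => ⟨0, hm⟩

noncomputable def enc (L : List (Fin t → Fin n → Fin m))
    (hL : ∀ x : SparseVec n r, ∃ σ ∈ L, Good σ x) (x : SparseVec n r) : List Bool :=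
  (List.ofFn fun v : Fin m => decide (v ∈ Bset (L.get (qf L hL x)) x)) ++
    List.replicate ((qf L hL x).1 + 1) false

lemma len_enc (L : List (Fin t → Fin n → Fin m)) (hL : ∀ x : SparseVec n r, ∃ σ ∈ L, Good σ x)
    (x : SparseVec n r) : (enc L hL x).length = m + 1 + (qf L hL x).1 := by
  simp [enc]
  omega

lemma dec_len (hm : 0 < m) (L : List (Fin t → Fin n → Fin m))
    (hL : ∀ x : SparseVec n r, ∃ σ ∈ L, Good σ x) (x : SparseVec n r) :
    dec hm L (enc L hL x).length = L.get (qf L hL x) := by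
  rw [len_enc]
  unfold dec
  have hidx : m + 1 + (qf L hL x).1 - (m + 1) = (qf L hL x).1 := by omega
  simp only [hidx]
  rw [dif_pos (qf L hL x).isLt]

lemma enc_getD (L : List (Fin t → Fin n → Fin m))
    (hL : ∀ x : SparseVec n r, ∃ σ ∈ L, Good σ x) (x : SparseVec n r) (v : Fin m) :
    (enc L hL x).getD v.1 false = decide (v ∈ Bset (L.get (qf L hL x)) x) := by
  unfold enc
  rw [List.getD_append _ _ _ _ (by simpa using v.isLt)]
  rw [List.getD_eq_getElem _ _ (by simpa using v.isLt)]
  simp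

noncomputable def Sdef (hm : 0 < m) (L : List (Fin t → Fin n → Fin m)) (j : Fin n) (ℓ : ℕ) :
    Finset ℕ :=
  if m + 1 ≤ ℓ then Finset.image (fun i : Fin t => (dec hm L ℓ i j).1 + 1) Finset.univ else ∅

noncomputable def gdef (hm : 0 < m) (L : List (Fin t → Fin n → Fin m)) (j : Fin n) (ℓ : ℕ)
    (f : ℕ → Bool) : Bool :=
  if m + 1 ≤ ℓ then decide (∀ i : Fin t, f ((dec hm L ℓ i j).1 + 1) = true) else false

lemma decode_eq (hm : 0 < m) (L : List (Fin t → Fin n → Fin m))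
    (hL : ∀ x : SparseVec n r, ∃ σ ∈ L, Good σ x) (x : SparseVec n r) (j : Fin n) :
    gdef hm L j (enc L hL x).length (fun i => (enc L hL x).getD (i - 1) false) = x.1 j := by
  have hlen : (enc L hL x).length = m + 1 + (qf L hL x).1 := len_enc L hL x
  have hge : m + 1 ≤ (enc L hL x).length := by omega
  unfold gdef
  rw [if_pos hge, dec_len hm L hL x]
  have hread : ∀ i : Fin t,
      (enc L hL x).getD ((L.get (qf L hL x)) i j + 1 - 1) false
        = decide ((L.get (qf L hL x)) i j ∈ Bset (L.get (qf L hL x)) x) := by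
    intro i
    rw [Nat.add_sub_cancel]
    exact enc_getD L hL x _
  cases hxj : x.1 j with
  | true =>
    apply decide_eq_true
    intro i
    show (enc L hL x).getD ((L.get (qf L hL x) i j : ℕ) + 1 - 1) false = true
    rw [hread i]
    exact decide_eq_true (mem_Bset hxj i)
  | false =>
    obtain ⟨i0, hi0⟩ := qf_spec L hL x j hxj
    apply decide_eq_false
    intro hall
    have hv : (enc L hL x).getD ((L.get (qf L hL x) i0 j : ℕ) + 1 - 1) false = true := hall i0
    rw [hread i0] at hv
    exact hi0 (of_decide_eq_true hv)

noncomputable def bloomCode (hm : 0 < m) (htd : t ≤ d)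
    (L : List (Fin t → Fin n → Fin m)) (hL : ∀ x : SparseVec n r, ∃ σ ∈ L, Good σ x) :
    NonAdaptiveLDC r d n where
  enc := enc L hL
  enc_inj := by
    intro x y hxy
    apply Subtype.ext; funext j
    have hx := decode_eq hm L hL x j
    have hy := decode_eq hm L hL y j
    rw [← hx, ← hy, hxy]
  S := Sdef hm L
  S_sub := by
    intro j ℓ
    unfold Sdef
    split
    · rename_i hℓ
      intro p hp
      simp only [Finset.mem_image] at hp
      obtain ⟨i, _, rfl⟩ := hp
      have := (dec hm L ℓ i j).isLt
      exact Finset.mem_Icc.2 ⟨by omega, by omega⟩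
    · simp
  S_card := by
    intro j ℓ
    unfold Sdef
    split
    · calc (Finset.image (fun i : Fin t => (dec hm L ℓ i j).1 + 1) Finset.univ).card
          ≤ (Finset.univ : Finset (Fin t)).card := Finset.card_image_le
      _ = t := by simp
      _ ≤ d := htd
    · simp
  g := gdef hm L
  g_local := by
    intro j ℓ f f' hff
    unfold gdef
    split
    · rename_i hℓ
      apply decide_eq_decide.mpr
      apply forall_congr'
      intro i
      have hmem : (dec hm L ℓ i j).1 + 1 ∈ Sdef hm L j ℓ := by
        unfold Sdef
        rw [if_pos hℓ]
        exact Finset.mem_image.2 ⟨i, Finset.mem_univ _, rfl⟩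
      rw [hff _ hmem]
    · rfl
  correct := fun x j => decode_eq hm L hL x j

lemma enc_len_le (L : List (Fin t → Fin n → Fin m))
    (hL : ∀ x : SparseVec n r, ∃ σ ∈ L, Good σ x) (x : SparseVec n r) :
    (enc L hL x).length ≤ m + L.length := by
  rw [len_enc]
  have := (qf L hL x).isLt
  omega

end Code

def sparseEquiv (n r : ℕ) : SparseVec n r ≃ {s : Finset (Fin n) // s.card = r} where
  toFun x := ⟨Finset.univ.filter fun i => x.1 i = true, x.2⟩
  invFun s := ⟨fun i => decide (i ∈ s.1), by
    have h : (Finset.univ.filter fun i => (decide (i ∈ s.1)) = true) = s.1 := by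
      ext i; simp
    show (Finset.univ.filter fun i => (decide (i ∈ s.1)) = true).card = r
    rw [h]; exact s.2⟩
  left_inv x := by
    apply Subtype.ext; funext i
    by_cases h : x.1 i = true <;> simp [h]
  right_inv s := by
    apply Subtype.ext
    ext i; simp

lemma card_sparseVec (n r : ℕ) : Fintype.card (SparseVec n r) = n.choose r := by
  rw [Fintype.card_congr (sparseEquiv n r), Fintype.card_finset_len, Fintype.card_fin]

lemma expLenN_le {r d n : ℕ} (c : NonAdaptiveLDC r d n) (Lmax : ℕ) (hC : 0 < n.choose r)
    (hlen : ∀ x, (c.enc x).length ≤ Lmax) : expLenN c ≤ Lmax := by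
  unfold expLenN
  rw [div_le_iff₀ (by exact_mod_cast hC)]
  calc ∑ x : SparseVec n r, ((c.enc x).length : ℝ)
      ≤ ∑ _x : SparseVec n r, (Lmax : ℝ) :=
        Finset.sum_le_sum fun x _ => by exact_mod_cast hlen x
  _ = (Fintype.card (SparseVec n r) : ℝ) * Lmax := by
      rw [Finset.sum_const, nsmul_eq_mul, Finset.card_univ]
  _ = (Lmax : ℝ) * (n.choose r : ℝ) := by rw [card_sparseVec]; ring

set_option maxHeartbeats 1000000 in
lemma key_lemma (ε K : ℝ) (hε : 0 < ε) (hK : 0 < K) (n rr dd : ℕ)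
    (hn2 : 2 ≤ n) (hr1 : 1 ≤ rr) (hrn : 2 * rr ≤ n)
    (hsp : (rr : ℝ) ≤ (n : ℝ) ^ (1 - ε))
    (hdn : K * Real.logb 2 n ≤ (dd : ℝ))
    (hεn : 2 / ε ≤ Real.logb 2 n) :
    ∃ c : NonAdaptiveLDC rr dd n,
      expLenN c / Real.logb 2 (n.choose rr) ≤ 2 ^ (⌈2/K⌉₊ + 2) * (K + 1) / ε + 2 := by
  have hn0 : (0:ℝ) < n := by exact_mod_cast (by omega : 0 < n)
  have hn2' : (2:ℝ) ≤ n := by exact_mod_cast hn2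
  set lgn := Real.logb 2 (n : ℝ) with hlgn
  have hlgn1 : 1 ≤ lgn := by
    rw [hlgn, show (1:ℝ) = Real.logb 2 2 from (Real.logb_self_eq_one (by norm_num)).symm]
    exact Real.logb_le_logb_of_le (by norm_num) (by norm_num) hn2'
  have hlgn0 : 0 < lgn := lt_of_lt_of_le one_pos hlgn1
  set a := ⌈2/K⌉₊ + 1 with ha
  set t := ⌈K * lgn⌉₊ with ht
  have htpos : 0 < t := Nat.ceil_pos.mpr (by positivity)
  have htd : t ≤ dd := Nat.ceil_le.mpr hdn
  have htK : K * lgn ≤ (t:ℝ) := Nat.le_ceil _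
  have htK2 : (t:ℝ) ≤ K * lgn + 1 := le_of_lt (Nat.ceil_lt_add_one (by positivity))
  set m := 2 ^ a * (t * rr) with hm
  have hmpos : 0 < m :=
    Nat.mul_pos (Nat.pow_pos (by norm_num)) (Nat.mul_pos htpos (by omega))
  have hK' : (0:ℝ) < 2 / K := by positivity
  have haK : 2 / K + 1 ≤ (a : ℝ) := by
    have h0 := Nat.le_ceil (2 / K)
    push_cast [ha]
    linarith
  have hat : 2 * lgn + 1 ≤ ((a * t : ℕ) : ℝ) := by
    rw [Nat.cast_mul]
    have h1 : (2 / K) * (K * lgn) ≤ (2/K) * t := mul_le_mul_of_nonneg_left htK (le_of_lt hK')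
    have h2 : (2/K) * (K * lgn) = 2 * lgn := by field_simp
    have h3 : (1:ℝ) ≤ t := by exact_mod_cast htpos
    have h4 : (2/K + 1) * (t:ℝ) ≤ (a:ℝ) * t := by
      apply mul_le_mul_of_nonneg_right haK (by positivity)
    nlinarith [h1, h2, h3, h4]
  have hcount : 2 * (n * (t * rr) ^ t) ≤ m ^ t := by
    have hmt : m ^ t = 2 ^ (a * t) * (t * rr) ^ t := by
      rw [hm, mul_pow, pow_mul]
    have h2n : 2 * n ≤ 2 ^ (a * t) := by
      have hreal : ((2 * n : ℕ) : ℝ) ≤ ((2 ^ (a * t) : ℕ) : ℝ) := by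
        have e1 : ((2:ℝ)) ^ (a*t : ℕ) = (2:ℝ) ^ ((a*t : ℕ) : ℝ) := (Real.rpow_natCast 2 _).symm
        have e2 : (2:ℝ) ^ (2 * lgn + 1) ≤ (2:ℝ) ^ ((a*t : ℕ) : ℝ) :=
          (Real.rpow_le_rpow_left_iff (by norm_num)).mpr hat
        have e3 : (2:ℝ) ^ (2 * lgn + 1) = (n:ℝ) * n * 2 := by
          rw [Real.rpow_add (by norm_num), Real.rpow_one]
          rw [show (2:ℝ) * lgn = lgn + lgn by ring, Real.rpow_add (by norm_num)]
          rw [hlgn, Real.rpow_logb (by norm_num) (by norm_num) hn0]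
        rw [Nat.cast_mul, Nat.cast_pow, Nat.cast_ofNat, e1]
        nlinarith [e2, e3, hn2']
      exact_mod_cast hreal
    calc 2 * (n * (t * rr) ^ t) = (2 * n) * (t * rr) ^ t := by ring
    _ ≤ 2 ^ (a * t) * (t * rr) ^ t := Nat.mul_le_mul_right _ h2n
    _ = m ^ t := hmt.symm
  obtain ⟨L, hT, hLgood⟩ := exists_family (n := n) (r := rr) (t := t) (m := m) hmpos hcount
  rw [card_sparseVec] at hT
  have hCpos : 0 < n.choose rr := Nat.choose_pos (by omega)
  refine ⟨bloomCode hmpos htd L hLgood, ?_⟩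
  set lgC := Real.logb 2 ((n.choose rr : ℕ) : ℝ) with hlgC
  have hrr0 : (0:ℝ) < rr := by exact_mod_cast hr1
  have hnen : (0:ℝ) < (n:ℝ) ^ ε := Real.rpow_pos_of_pos hn0 ε
  have hA : (n:ℝ) ^ ε / 2 ≤ (n:ℝ) / (2 * rr) := by
    rw [div_le_div_iff₀ (by norm_num) (by positivity)]
    have h5 : (n:ℝ) ^ ε * rr ≤ (n:ℝ) ^ ε * (n:ℝ) ^ (1 - ε) :=
      mul_le_mul_of_nonneg_left hsp (le_of_lt hnen)
    rw [← Real.rpow_add hn0] at h5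
    have h6 : ε + (1 - ε) = 1 := by ring
    rw [h6, Real.rpow_one] at h5
    nlinarith [h5]
  have hB : (n:ℝ) / (2 * rr) ≤ ((n + 1 - rr : ℕ) : ℝ) / rr := by
    have hsub : ((n + 1 - rr : ℕ) : ℝ) = (n:ℝ) + 1 - rr := by
      rw [Nat.cast_sub (by omega : rr ≤ n + 1)]
      push_cast
      ring
    rw [hsub, div_le_div_iff₀ (by positivity) hrr0]
    have h2rn : (2:ℝ) * rr ≤ n := by exact_mod_cast hrn
    have hkey : (0:ℝ) ≤ ((n:ℝ) + 2 - 2*rr) * rr := mul_nonneg (by linarith) (le_of_lt hrr0)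
    nlinarith [hkey]
  have hC1 : ((n:ℝ) ^ ε / 2) ^ rr ≤ (((n + 1 - rr : ℕ) : ℝ) / rr) ^ rr :=
    pow_le_pow_left₀ (by positivity) (hA.trans hB) rr
  have hC2 : (((n + 1 - rr : ℕ) : ℝ) / rr) ^ rr
      ≤ ((n + 1 - rr : ℕ) : ℝ) ^ rr / (rr.factorial : ℝ) := by
    rw [div_pow]
    apply div_le_div_of_nonneg_left (pow_nonneg (by positivity) rr)
      (by exact_mod_cast Nat.factorial_pos rr)
      (by exact_mod_cast Nat.factorial_le_pow rr)
  have hC3 : ((n + 1 - rr : ℕ) : ℝ) ^ rr / (rr.factorial : ℝ) ≤ ((n.choose rr : ℕ) : ℝ) :=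
    Nat.pow_le_choose rr n
  have hCge : ((n:ℝ) ^ ε / 2) ^ rr ≤ ((n.choose rr : ℕ) : ℝ) := (hC1.trans hC2).trans hC3
  have hεlgn : 2 ≤ ε * lgn := by
    have h7 : ε * (2/ε) ≤ ε * lgn := mul_le_mul_of_nonneg_left hεn (le_of_lt hε)
    have h8 : ε * (2/ε) = 2 := by field_simp
    linarith
  have hlog1 : Real.logb 2 (((n:ℝ) ^ ε / 2) ^ rr) ≤ lgC :=
    Real.logb_le_logb_of_le (by norm_num) (by positivity) hCge
  have hlog2 : Real.logb 2 (((n:ℝ) ^ ε / 2) ^ rr) = rr * (ε * lgn - 1) := by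
    rw [Real.logb_pow]
    rw [Real.logb_div (ne_of_gt hnen) (by norm_num)]
    rw [Real.logb_rpow_eq_mul_logb_of_pos hn0]
    rw [Real.logb_self_eq_one (by norm_num)]
  have hlgC1 : (ε / 2) * rr * lgn ≤ lgC := by
    have h5 : (ε/2) * lgn ≤ ε * lgn - 1 := by linarith
    have h9 : (rr:ℝ) * ((ε/2) * lgn) ≤ rr * (ε * lgn - 1) :=
      mul_le_mul_of_nonneg_left h5 (le_of_lt hrr0)
    calc (ε / 2) * rr * lgn = rr * ((ε/2)*lgn) := by ring
    _ ≤ rr * (ε * lgn - 1) := h9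
    _ = Real.logb 2 (((n:ℝ) ^ ε / 2) ^ rr) := hlog2.symm
    _ ≤ lgC := hlog1
  have hlgC2 : 1 ≤ lgC := by
    have h10 : (1:ℝ) * (2/ε) ≤ rr * lgn :=
      mul_le_mul (by exact_mod_cast hr1) hεn (by positivity) (by positivity)
    have h11 : (ε/2) * (1 * (2/ε)) ≤ (ε/2) * (rr * lgn) :=
      mul_le_mul_of_nonneg_left h10 (by positivity)
    have h12 : (ε/2) * (1 * (2/ε)) = 1 := by field_simp
    have h13 : (ε/2) * ((rr:ℝ) * lgn) = (ε/2) * rr * lgn := by ring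
    linarith [hlgC1]
  have hlgC0 : 0 < lgC := lt_of_lt_of_le one_pos hlgC2
  rw [div_le_iff₀ hlgC0]
  have hlenb : expLenN (bloomCode hmpos htd L hLgood)
      ≤ ((m + (Nat.log 2 (n.choose rr) + 1) : ℕ) : ℝ) := by
    apply expLenN_le _ _ hCpos
    intro x
    exact (enc_len_le L hLgood x).trans (by omega)
  have hmb : (m:ℝ) ≤ 2^(a+1) * (K+1) / ε * lgC := by
    have htb : (t:ℝ) ≤ (K + 1) * lgn := by nlinarith [htK2, hlgn1, hK]
    have hmR : (m:ℝ) = 2^a * ((t:ℝ) * rr) := by rw [hm]; push_cast; ring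
    calc (m:ℝ) = 2^a * ((t:ℝ) * rr) := hmR
    _ ≤ 2^a * (((K+1) * lgn) * rr) := by
        apply mul_le_mul_of_nonneg_left _ (by positivity)
        apply mul_le_mul_of_nonneg_right htb (by positivity)
    _ = (2^(a+1) * (K+1) / ε) * ((ε/2) * rr * lgn) := by
        field_simp
        ring
    _ ≤ (2^(a+1) * (K+1) / ε) * lgC := by
        apply mul_le_mul_of_nonneg_left hlgC1 (by positivity)
  have hTb : ((Nat.log 2 (n.choose rr) : ℕ) : ℝ) ≤ lgC := by
    have h8 : ((2:ℝ))^(Nat.log 2 (n.choose rr) : ℕ) ≤ ((n.choose rr : ℕ) : ℝ) := by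
      exact_mod_cast Nat.pow_log_le_self 2 hCpos.ne'
    have h9 := Real.logb_le_logb_of_le (b := 2) (by norm_num) (by positivity) h8
    rw [Real.logb_pow, Real.logb_self_eq_one (by norm_num), mul_one] at h9
    exact h9
  calc expLenN (bloomCode hmpos htd L hLgood)
      ≤ ((m + (Nat.log 2 (n.choose rr) + 1) : ℕ) : ℝ) := hlenb
  _ = (m:ℝ) + ((Nat.log 2 (n.choose rr) : ℕ) : ℝ) + 1 := by push_cast; ring
  _ ≤ (2^(a+1) * (K+1) / ε) * lgC + lgC + lgC := by linarith [hmb, hTb, hlgC2]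
  _ = (2^(a+1) * (K+1) / ε + 2) * lgC := by ring
  _ = (2 ^ (⌈2/K⌉₊ + 2) * (K + 1) / ε + 2) * lgC := by
      rw [show a + 1 = ⌈2/K⌉₊ + 2 from by omega]

end LDCAux

/-- Corollary 2 ("if" direction): if `rₙ ≤ n^{1−ε}` and `dₙ ≥ K log₂ n` for large `n`,
then there exists a competitively optimal sequence of non-adaptive
`(rₙ,dₙ,n)`-locally decodable codes, i.e. a sequence for which
`E[ℓ(cₙ(Xⁿ))] / log₂ C(n,rₙ)` is eventually bounded above (finite limsup). -/
theorem competitively_optimal_sparse_sufficient (ε K : ℝ) (hε : 0 < ε) (hK : 0 < K)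
    (r d : ℕ → ℕ)
    (hpos : ∀ n, 2 ≤ n → 1 ≤ r n ∧ 2 * r n ≤ n ∧ 1 ≤ d n)
    (hsparse : ∀ᶠ n : ℕ in atTop, (r n : ℝ) ≤ (n : ℝ) ^ (1 - ε))
    (hd : ∀ᶠ n : ℕ in atTop, (d n : ℝ) ≥ K * Real.logb 2 n) :
    ∃ c : ∀ n, NonAdaptiveLDC (r n) (d n) n,
      IsBoundedUnder (· ≤ ·) atTop
        (fun n => expLenN (c n) / Real.logb 2 (n.choose (r n))) := by
  classical
  set M : ℝ := 2 ^ (⌈2/K⌉₊ + 2) * (K + 1) / ε + 2 with hM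
  let P : ℕ → Prop := fun n => 2 ≤ n ∧ (r n : ℝ) ≤ (n : ℝ) ^ (1 - ε) ∧
    K * Real.logb 2 n ≤ (d n : ℝ) ∧ 2 / ε ≤ Real.logb 2 n
  have hGchoice : ∀ n : ℕ, P n →
      ∃ c : NonAdaptiveLDC (r n) (d n) n,
        expLenN c / Real.logb 2 ((n.choose (r n) : ℕ)) ≤ M := by
    intro n hG
    obtain ⟨h1, h2, _h3⟩ := hpos n hG.1
    exact LDCAux.key_lemma ε K hε hK n (r n) (d n) hG.1 h1 h2 hG.2.1 hG.2.2.1 hG.2.2.2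
  refine ⟨fun n => if h : P n then (hGchoice n h).choose
    else LDCAux.trivialCode (r n) (d n) n, ?_⟩
  apply Filter.isBoundedUnder_of_eventually_le (a := M)
  have hlogt : Filter.Tendsto (fun n : ℕ => Real.logb 2 (n : ℝ)) atTop atTop :=
    (Real.tendsto_logb_atTop (by norm_num)).comp tendsto_natCast_atTop_atTop
  filter_upwards [hsparse, hd, hlogt.eventually_ge_atTop (2 / ε),
    Filter.eventually_ge_atTop 2] with n hs hdd hl h2n
  have hG : P n := ⟨h2n, hs, hdd, hl⟩
  rw [dif_pos hG]
  exact (hGchoice n hG).choose_spec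
end

section
/- Fix positive integers r and d, and for each n ≥ 2r let L*_n denote the infimum of E[ℓ(c(X^n))] over all adaptive (r,d,n)-locally decodable source codes c. Then there exist constants c1, c2 > 0 such that for all sufficiently large n: c1 · n^{r/(rd+1)} ≤ L*_n ≤ c2 · n^{r/(rd+1)}. -/
open Filter MeasureTheory

/-- An adaptive `(r,d,n)`-locally decodable source code. -/
structure AdaptiveLDC (r d n : ℕ) where
  enc : SparseVec n r → List Bool
  enc_inj : Function.Injective enc
  tree : Fin n → ℕ → DTree
  depth_le : ∀ j ℓ, (tree j ℓ).depth ≤ d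
  bounded : ∀ j ℓ, (tree j ℓ).boundedBy ℓ
  correct : ∀ x (j : Fin n), (tree j (enc x).length).eval (enc x) = x.1 j

/-- Expected codeword length under the uniform distribution on `r`-sparse vectors. -/
noncomputable def expLenA {r d n : ℕ} (c : AdaptiveLDC r d n) : ℝ :=
  (∑ x : SparseVec n r, ((c.enc x).length : ℝ)) / (n.choose r : ℝ)

namespace DTree

/-- The probed positions together with the observed values along the evaluation path. -/
def path (w : List Bool) : DTree → List (ℕ × Bool)
  | leaf _ => []
  | node p l h =>
      (p, w.getD (p - 1) false) ::
        (if w.getD (p - 1) false then h.path w else l.path w)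

theorem path_length_le_depth (w : List Bool) : ∀ T : DTree, (T.path w).length ≤ T.depth
  | leaf _ => le_rfl
  | node p l h => by
      simp only [path, depth, List.length_cons]
      split
      · have := path_length_le_depth w h
        omega
      · have := path_length_le_depth w l
        omega

theorem path_self (w : List Bool) :
    ∀ T : DTree, ∀ q ∈ T.path w, w.getD (q.1 - 1) false = q.2
  | leaf _ => by simp [path]
  | node p l h => by
      intro q hq
      simp only [path, List.mem_cons] at hq
      rcases hq with rfl | hq
      · rfl
      · split at hq
        · exact path_self w h q hq
        · exact path_self w l q hq

theorem path_pos_bounded {ℓ : ℕ} (w : List Bool) :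
    ∀ T : DTree, T.boundedBy ℓ → ∀ q ∈ T.path w, 1 ≤ q.1 ∧ q.1 ≤ ℓ
  | leaf _ => by simp [path]
  | node p l h => by
      intro hb q hq
      obtain ⟨h1, h2, hbl, hbh⟩ := hb
      simp only [path, List.mem_cons] at hq
      rcases hq with rfl | hq
      · exact ⟨h1, h2⟩
      · split at hq
        · exact path_pos_bounded w h hbh q hq
        · exact path_pos_bounded w l hbl q hq

/-- If `w'` agrees with `w` on all positions probed along the path of `T` on `w`,
then `T` evaluates the same on both. -/
theorem eval_eq_of_agree (w w' : List Bool) :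
    ∀ T : DTree, (∀ q ∈ T.path w, w'.getD (q.1 - 1) false = q.2) →
      T.eval w' = T.eval w
  | leaf _ => fun _ => rfl
  | node p l h => by
      intro hag
      have hp : w'.getD (p - 1) false = w.getD (p - 1) false := by
        have := hag (p, w.getD (p - 1) false) (by simp [path])
        simpa using this
      simp only [eval, hp]
      by_cases hw : w.getD (p - 1) false = true
      · rw [hw]
        simp only [if_true]
        refine eval_eq_of_agree w w' h (fun q hq => hag q ?_)
        simp only [path, List.mem_cons]
        rw [if_pos hw]
        exact Or.inr hq
      · rw [Bool.not_eq_true] at hw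
        rw [hw]
        simp only [Bool.false_eq_true, if_false]
        refine eval_eq_of_agree w w' l (fun q hq => hag q ?_)
        simp only [path, List.mem_cons]
        rw [if_neg (by rw [hw]; simp)]
        exact Or.inr hq

end DTree
section Counting

variable {r d n : ℕ}

/-- Support of a sparse vector. -/
def supp {n r : ℕ} (x : SparseVec n r) : Finset (Fin n) :=
  Finset.univ.filter fun i => x.1 i = true

theorem card_supp (x : SparseVec n r) : (supp x).card = r := x.2

theorem mem_supp {x : SparseVec n r} {j : Fin n} : j ∈ supp x ↔ x.1 j = true := by
  simp [supp]

theorem eq_of_supp_eq {x x' : SparseVec n r} (h : supp x = supp x') : x = x' := by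
  apply Subtype.ext
  funext j
  have := Finset.ext_iff.mp h j
  simp only [mem_supp] at this
  cases hx : x.1 j
  · cases hx' : x'.1 j
    · rfl
    · exact absurd (this.mpr hx') (by simp [hx])
  · exact (this.mp hx).symm

/-- The joint certificate: concatenation of the probe paths of the decoders of the
support coordinates. -/
def cert (c : AdaptiveLDC r d n) (x : SparseVec n r) : List (ℕ × Bool) :=
  (((supp x).sort (· ≤ ·)).map
    (fun j => ((c.tree j (c.enc x).length).path (c.enc x)))).flatten

theorem cert_length (c : AdaptiveLDC r d n) (x : SparseVec n r) :
    (cert c x).length ≤ r * d := by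
  rw [cert, List.length_flatten, List.map_map]
  calc ((((supp x).sort (· ≤ ·)).map
        (List.length ∘ fun j => (c.tree j (c.enc x).length).path (c.enc x)))).sum
      ≤ ((((supp x).sort (· ≤ ·)).map fun _ => d)).sum := by
        apply List.sum_le_sum
        intro a _
        exact (DTree.path_length_le_depth _ _).trans (c.depth_le _ _)
    _ = r * d := by
        rw [List.map_const', List.sum_replicate, Finset.length_sort, card_supp,
          smul_eq_mul]

theorem mem_cert_self (c : AdaptiveLDC r d n) (x : SparseVec n r) :
    ∀ q ∈ cert c x, (c.enc x).getD (q.1 - 1) false = q.2 := by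
  intro q hq
  rw [cert, List.mem_flatten] at hq
  obtain ⟨l, hl, hql⟩ := hq
  obtain ⟨j, _, rfl⟩ := List.mem_map.mp hl
  exact DTree.path_self _ _ q hql

theorem mem_cert_bounds (c : AdaptiveLDC r d n) (x : SparseVec n r) :
    ∀ q ∈ cert c x, 1 ≤ q.1 ∧ q.1 ≤ (c.enc x).length := by
  intro q hq
  rw [cert, List.mem_flatten] at hq
  obtain ⟨l, hl, hql⟩ := hq
  obtain ⟨j, _, rfl⟩ := List.mem_map.mp hl
  exact DTree.path_pos_bounded _ _ (c.bounded _ _) q hql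

theorem cert_inj (c : AdaptiveLDC r d n) {x x' : SparseVec n r}
    (hlen : (c.enc x).length = (c.enc x').length)
    (h : cert c x = cert c x') : x = x' := by
  -- main step: one-sided support inclusion
  have key : ∀ (y y' : SparseVec n r), (c.enc y).length = (c.enc y').length →
      cert c y = cert c y' → supp y ⊆ supp y' := by
    intro y y' hl hc j hj
    rw [mem_supp]
    have hcor' := c.correct y' j
    rw [← hl] at hcor'
    rw [← hcor']
    have hagree : ∀ q ∈ (c.tree j (c.enc y).length).path (c.enc y),
        (c.enc y').getD (q.1 - 1) false = q.2 := by
      intro q hq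
      apply mem_cert_self c y'
      rw [← hc, cert, List.mem_flatten]
      exact ⟨_, List.mem_map.mpr ⟨j, (Finset.mem_sort _).mpr hj, rfl⟩, hq⟩
    rw [DTree.eval_eq_of_agree _ _ _ hagree]
    rw [c.correct y j, ← mem_supp.mp hj]
  apply eq_of_supp_eq
  exact Finset.Subset.antisymm (key x x' hlen h) (key x' x hlen.symm h.symm)

end Counting
section CardBound

variable {r d n : ℕ}

/-- Encode a probe/answer pair as a natural number. -/
def pairVal (q : ℕ × Bool) : ℕ := 2 * q.1 + if q.2 then 1 else 0

theorem pairVal_inj : Function.Injective pairVal := by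
  rintro ⟨a, b⟩ ⟨a', b'⟩ h
  simp only [pairVal] at h
  cases b <;> cases b' <;> simp_all <;> omega

theorem Finset.card_level (c : AdaptiveLDC r d n) (ℓ : ℕ) :
    ((Finset.univ : Finset (SparseVec n r)).filter
      fun x => (c.enc x).length = ℓ).card ≤ (2 * ℓ + 2) ^ (r * d) := by
  classical
  have hcard : (Fintype.piFinset (fun _ : Fin (r * d) => Finset.range (2 * ℓ + 2))).card
      = (2 * ℓ + 2) ^ (r * d) := by
    rw [Fintype.card_piFinset]
    simp
  rw [← hcard]
  apply Finset.card_le_card_of_injOn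
    (fun x => fun k : Fin (r * d) => ((cert c x).map pairVal).getD k 0)
  · -- maps into the pi finset
    intro x hx
    rw [Finset.mem_coe, Finset.mem_filter] at hx
    rw [Finset.mem_coe, Fintype.mem_piFinset]
    intro k
    rw [Finset.mem_range]
    dsimp only
    by_cases hk : (k : ℕ) < ((cert c x).map pairVal).length
    · rw [List.getD_eq_getElem _ _ hk]
      have hmem := List.getElem_mem hk
      rw [List.mem_map] at hmem
      obtain ⟨q, hq, hval⟩ := hmem
      have hb := mem_cert_bounds c x q hq
      rw [hx.2] at hb
      rw [← hval, pairVal]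
      have : (if q.2 then 1 else 0) ≤ 1 := by split <;> omega
      omega
    · rw [List.getD_eq_default _ _ (le_of_not_gt hk)]
      omega
  · -- injective
    intro x hx x' hx' hE
    rw [Finset.mem_coe, Finset.mem_filter] at hx hx'
    have hlen : (c.enc x).length = (c.enc x').length := by rw [hx.2, hx'.2]
    -- lengths of certificates agree
    have key : ∀ y y' : SparseVec n r,
        ((fun k : Fin (r * d) => ((cert c y).map pairVal).getD k 0) =
          fun k : Fin (r * d) => ((cert c y').map pairVal).getD k 0) →
        ¬ ((cert c y).length < (cert c y').length) := by
      intro y y' hEE hlt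
      have hle' : (cert c y').length ≤ r * d := cert_length c y'
      have hk : (cert c y).length < r * d := lt_of_lt_of_le hlt hle'
      have h0 : ((cert c y).map pairVal).getD (cert c y).length 0 = 0 :=
        List.getD_eq_default _ _ (by rw [List.length_map])
      have h1 : ((cert c y').map pairVal).getD (cert c y).length 0 ≠ 0 := by
        have hlt' : (cert c y).length < ((cert c y').map pairVal).length := by
          rwa [List.length_map]
        rw [List.getD_eq_getElem _ _ hlt']
        have hmem := List.getElem_mem hlt'
        rw [List.mem_map] at hmem
        obtain ⟨q, hq, hval⟩ := hmem
        have hb := (mem_cert_bounds c y' q hq).1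
        rw [← hval, pairVal]
        omega
      have := congrFun hEE ⟨(cert c y).length, hk⟩
      simp only at this
      rw [h0] at this
      exact h1 this.symm
    have hll : (cert c x).length = (cert c x').length := by
      rcases lt_trichotomy (cert c x).length (cert c x').length with h | h | h
      · exact absurd h (key x x' hE)
      · exact h
      · exact absurd h (key x' x hE.symm)
    -- certificates agree
    have hcert : cert c x = cert c x' := by
      apply List.map_injective_iff.mpr pairVal_inj
      apply List.ext_getElem (by rw [List.length_map, List.length_map, hll])
      intro i h1 h2
      have hi : i < r * d := by
        rw [List.length_map] at h1
        exact lt_of_lt_of_le h1 (cert_length c x)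
      have := congrFun hE ⟨i, hi⟩
      simp only at this
      rwa [List.getD_eq_getElem _ _ h1, List.getD_eq_getElem _ _ h2] at this
    exact cert_inj c hlen hcert

end CardBound
section LowerBound

variable {r d n : ℕ}

theorem card_sparseVec (n r : ℕ) : Fintype.card (SparseVec n r) = n.choose r := by
  classical
  have e : SparseVec n r ≃ {s : Finset (Fin n) // s.card = r} := by
    refine ⟨fun x => ⟨supp x, card_supp x⟩,
      fun s => ⟨fun i => decide (i ∈ s.1), ?_⟩, fun x => ?_, fun s => ?_⟩
    · have : (Finset.univ.filter fun i => (decide (i ∈ s.1)) = true) = s.1 := by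
        ext i; simp
      simpa [Sparse, this] using s.2
    · apply Subtype.ext; funext i
      simp [supp]
    · apply Subtype.ext
      ext i; simp [supp]
  rw [Fintype.card_congr e, Fintype.card_finset_len, Fintype.card_fin]

theorem count_short (c : AdaptiveLDC r d n) (t : ℕ) (ht : 1 ≤ t) :
    ((Finset.univ : Finset (SparseVec n r)).filter
      fun x => (c.enc x).length < t).card ≤ t * (2 * t) ^ (r * d) := by
  classical
  have hsplit : ((Finset.univ : Finset (SparseVec n r)).filter
      fun x => (c.enc x).length < t) =
      (Finset.range t).biUnion fun ℓ =>
        (Finset.univ.filter fun x => (c.enc x).length = ℓ) := by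
    ext x
    simp [Finset.mem_biUnion]
  rw [hsplit]
  calc ((Finset.range t).biUnion fun ℓ =>
        (Finset.univ.filter fun x : SparseVec n r => (c.enc x).length = ℓ)).card
      ≤ ∑ ℓ ∈ Finset.range t,
        (Finset.univ.filter fun x : SparseVec n r => (c.enc x).length = ℓ).card :=
        Finset.card_biUnion_le
    _ ≤ ∑ ℓ ∈ Finset.range t, (2 * t) ^ (r * d) := by
        apply Finset.sum_le_sum
        intro ℓ hℓ
        rw [Finset.mem_range] at hℓ
        refine (Finset.card_level c ℓ).trans (Nat.pow_le_pow_left (by omega) _)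
    _ = t * (2 * t) ^ (r * d) := by rw [Finset.sum_const, Finset.card_range, smul_eq_mul]

/-- Main counting lower bound: if `2 t (2t)^(rd) ≤ C(n,r)` then every code has
expected length at least `t/2`. -/
theorem expLenA_lower (c : AdaptiveLDC r d n) (t : ℕ) (ht : 1 ≤ t)
    (hN : 2 * (t * (2 * t) ^ (r * d)) ≤ n.choose r) :
    (t : ℝ) / 2 ≤ expLenA c := by
  classical
  set N := n.choose r with hNdef
  have hNpos : 0 < N := by
    have := hN
    nlinarith [Nat.one_le_iff_ne_zero.mp ht, pow_pos (by omega : 0 < 2 * t) (r * d)]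
  -- sum bound in ℕ
  have hlong : N ≤ 2 * ((Finset.univ : Finset (SparseVec n r)).filter
      fun x => t ≤ (c.enc x).length).card := by
    have hsplit : ((Finset.univ.filter fun x : SparseVec n r => (c.enc x).length < t).card)
        + ((Finset.univ.filter fun x : SparseVec n r => t ≤ (c.enc x).length).card) = N := by
      rw [hNdef, ← card_sparseVec n r, Fintype.card]
      have := Finset.card_filter_add_card_filter_not
        (s := (Finset.univ : Finset (SparseVec n r)))
        (p := fun x => (c.enc x).length < t)
      simpa [not_lt] using this
    have hshort := count_short c t ht
    omega
  have hsum : (N : ℝ) * ((t : ℝ) / 2) ≤ ∑ x : SparseVec n r, ((c.enc x).length : ℝ) := by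
    have h1 : ∑ x ∈ (Finset.univ.filter fun x : SparseVec n r => t ≤ (c.enc x).length),
        (t : ℝ) ≤ ∑ x ∈ (Finset.univ.filter fun x : SparseVec n r => t ≤ (c.enc x).length),
        ((c.enc x).length : ℝ) := by
      apply Finset.sum_le_sum
      intro x hx
      rw [Finset.mem_filter] at hx
      exact_mod_cast hx.2
    have h2 : ∑ x ∈ (Finset.univ.filter fun x : SparseVec n r => t ≤ (c.enc x).length),
        ((c.enc x).length : ℝ) ≤ ∑ x : SparseVec n r, ((c.enc x).length : ℝ) := by
      apply Finset.sum_le_sum_of_subset_of_nonneg (Finset.filter_subset _ _)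
      intro x _ _
      positivity
    rw [Finset.sum_const, nsmul_eq_mul] at h1
    have hcard : (N : ℝ) / 2 ≤ ((Finset.univ.filter
        fun x : SparseVec n r => t ≤ (c.enc x).length).card : ℝ) := by
      have : (N : ℝ) ≤ 2 * ((Finset.univ.filter
          fun x : SparseVec n r => t ≤ (c.enc x).length).card : ℝ) := by
        exact_mod_cast hlong
      linarith
    have ht0 : (0 : ℝ) ≤ t := by positivity
    calc (N : ℝ) * ((t : ℝ) / 2) = ((N : ℝ) / 2) * t := by ring
      _ ≤ ((Finset.univ.filter
          fun x : SparseVec n r => t ≤ (c.enc x).length).card : ℝ) * t := by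
          apply mul_le_mul_of_nonneg_right hcard ht0
      _ ≤ ∑ x : SparseVec n r, ((c.enc x).length : ℝ) := le_trans (le_of_eq (by ring_nf)) (h1.trans h2)
  rw [expLenA, ← hNdef, le_div_iff₀ (by exact_mod_cast hNpos : (0:ℝ) < (N:ℝ))]
  calc (t : ℝ) / 2 * N = (N : ℝ) * ((t : ℝ) / 2) := by ring
    _ ≤ _ := hsum

end LowerBound
section Construction

theorem mpar_exists (r d n : ℕ) : ∃ m, 2 ≤ m ∧ n ≤ m ^ (r * d + 1) :=
  ⟨n + 2, by omega, by
    calc n ≤ n + 2 := by omega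
    _ ≤ (n + 2) ^ (r * d + 1) := Nat.le_self_pow (by omega) _⟩

/-- Minimal `m ≥ 2` with `n ≤ m^(r*d+1)`. -/
def mpar (r d n : ℕ) : ℕ := Nat.find (mpar_exists r d n)

theorem mpar_spec (r d n : ℕ) : 2 ≤ mpar r d n ∧ n ≤ (mpar r d n) ^ (r * d + 1) :=
  Nat.find_spec (mpar_exists r d n)

theorem mpar_min (r d n : ℕ) (m' : ℕ) (h2 : 2 ≤ m') (hle : n ≤ m' ^ (r * d + 1)) :
    mpar r d n ≤ m' := Nat.find_min' _ ⟨h2, hle⟩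

/-- A Bertrand prime above `a`. -/
noncomputable def bprime (a : ℕ) : ℕ :=
  if h : a ≠ 0 then (Nat.exists_prime_lt_and_le_two_mul a h).choose else 2

theorem bprime_spec {a : ℕ} (h : a ≠ 0) :
    (bprime a).Prime ∧ a < bprime a ∧ bprime a ≤ 2 * a := by
  rw [bprime, dif_pos h]
  exact (Nat.exists_prime_lt_and_le_two_mul a h).choose_spec

/-- Number of hash functions. -/
def TT (r d : ℕ) : ℕ := r * r * r * d + 1

/-- The `t`-th prime used for hashing. -/
noncomputable def pseq (r d n : ℕ) (t : ℕ) : ℕ := bprime^[t + 1] (mpar r d n)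

theorem pseq_spec (r d n : ℕ) (t : ℕ) :
    (pseq r d n t).Prime ∧ mpar r d n < pseq r d n t ∧
      pseq r d n t ≤ 2 ^ (t + 1) * mpar r d n := by
  induction t with
  | zero =>
      have h2 := (mpar_spec r d n).1
      have := bprime_spec (a := mpar r d n) (by omega)
      simpa [pseq] using ⟨this.1, this.2.1, by omega⟩
  | succ t ih =>
      have hne : pseq r d n t ≠ 0 := by omega
      have := bprime_spec hne
      have heq : pseq r d n (t + 1) = bprime (pseq r d n t) := by
        rw [pseq, pseq, Function.iterate_succ_apply']
      refine ⟨heq ▸ this.1, by omega, ?_⟩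
      rw [heq]
      calc bprime (pseq r d n t) ≤ 2 * pseq r d n t := this.2.2
        _ ≤ 2 * (2 ^ (t + 1) * mpar r d n) := by omega
        _ = 2 ^ (t + 1 + 1) * mpar r d n := by ring

theorem pseq_strictMono (r d n : ℕ) : StrictMono (pseq r d n) := by
  apply strictMono_nat_of_lt_succ
  intro t
  have hne : pseq r d n t ≠ 0 := by have := pseq_spec r d n t; have := (mpar_spec r d n).1; omega
  have heq : pseq r d n (t + 1) = bprime (pseq r d n t) := by
    rw [pseq, pseq, Function.iterate_succ_apply']
  rw [heq]
  exact (bprime_spec hne).2.1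

/-- Upper bound on all the hashing primes. -/
def PP (r d n : ℕ) : ℕ := 2 ^ (TT r d) * mpar r d n

theorem pseq_le_PP (r d n : ℕ) {t : ℕ} (ht : t < TT r d) : pseq r d n t ≤ PP r d n := by
  calc pseq r d n t ≤ 2 ^ (t + 1) * mpar r d n := (pseq_spec r d n t).2.2
    _ ≤ 2 ^ (TT r d) * mpar r d n := by
        apply Nat.mul_le_mul_right
        exact Nat.pow_le_pow_right (by omega) (by omega)

/-- Key: few of the primes can divide a fixed small positive number. -/
theorem card_divides_le (r d n : ℕ) {D : ℕ} (hD : 0 < D) (hDn : D < n) :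
    ((Finset.range (TT r d)).filter fun t => pseq r d n t ∣ D).card ≤ r * d := by
  by_contra hcon
  push_neg at hcon
  set S := (Finset.range (TT r d)).filter fun t => pseq r d n t ∣ D with hS
  set Ps := S.image (pseq r d n) with hPs
  have hcardPs : Ps.card = S.card :=
    Finset.card_image_of_injective _ (pseq_strictMono r d n).injective
  have hdvd : ∏ p ∈ Ps, p ∣ D := by
    apply Finset.prod_primes_dvd
    · intro p hp
      obtain ⟨t, _, rfl⟩ := Finset.mem_image.mp hp
      exact (pseq_spec r d n t).1.prime
    · intro p hp
      obtain ⟨t, ht, rfl⟩ := Finset.mem_image.mp hp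
      exact (Finset.mem_filter.mp ht).2
  have hm2 := (mpar_spec r d n).1
  have hlow : (mpar r d n + 1) ^ Ps.card ≤ ∏ p ∈ Ps, p := by
    apply Finset.pow_card_le_prod
    intro p hp
    obtain ⟨t, _, rfl⟩ := Finset.mem_image.mp hp
    exact (pseq_spec r d n t).2.1
  have hDle : (mpar r d n + 1) ^ Ps.card ≤ D := hlow.trans (Nat.le_of_dvd hD hdvd)
  have hDlt : D < (mpar r d n + 1) ^ (r * d + 1) := by
    calc D < n := hDn
      _ ≤ (mpar r d n) ^ (r * d + 1) := (mpar_spec r d n).2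
      _ ≤ (mpar r d n + 1) ^ (r * d + 1) := Nat.pow_le_pow_left (by omega) _
  have hcard_lt : Ps.card < r * d + 1 :=
    (Nat.pow_lt_pow_iff_right (by omega)).mp (hDle.trans_lt hDlt)
  omega

end Construction
section Construction2

variable {r d n : ℕ}

/-- `t` separates the support of `x` modulo `pseq t`. -/
def goodSep (r d n : ℕ) (t : ℕ) (x : SparseVec n r) : Prop :=
  ∀ e ∈ supp x, ∀ e' ∈ supp x, e ≠ e' → (e : ℕ) % pseq r d n t ≠ (e' : ℕ) % pseq r d n t

noncomputable instance (r d n t : ℕ) (x : SparseVec n r) : Decidable (goodSep r d n t x) :=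
  Classical.dec _

theorem sep_exists (r d n : ℕ) (x : SparseVec n r) :
    ∃ t, t < TT r d ∧ goodSep r d n t x := by
  classical
  set bad := (Finset.range (TT r d)).filter (fun t => ¬ goodSep r d n t x) with hbad
  have hsub : bad ⊆ ((supp x) ×ˢ (supp x)).biUnion fun ee =>
      (Finset.range (TT r d)).filter fun t =>
        ee.1 ≠ ee.2 ∧ (ee.1 : ℕ) % pseq r d n t = (ee.2 : ℕ) % pseq r d n t := by
    intro t ht
    rw [hbad, Finset.mem_filter] at ht
    rw [goodSep] at ht
    push_neg at ht
    obtain ⟨e, he, e', he', hne, heq⟩ := ht.2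
    rw [Finset.mem_biUnion]
    exact ⟨(e, e'), Finset.mem_product.mpr ⟨he, he'⟩,
      Finset.mem_filter.mpr ⟨ht.1, hne, heq⟩⟩
  have hpair : ∀ ee ∈ (supp x) ×ˢ (supp x),
      ((Finset.range (TT r d)).filter fun t =>
        ee.1 ≠ ee.2 ∧ (ee.1 : ℕ) % pseq r d n t = (ee.2 : ℕ) % pseq r d n t).card ≤ r * d := by
    rintro ⟨e, e'⟩ _
    by_cases hne : e ≠ e'
    · -- reduce to divisibility
      have key : ∀ (a b : Fin n), (a : ℕ) < (b : ℕ) →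
          ((Finset.range (TT r d)).filter fun t =>
            a ≠ b ∧ (a : ℕ) % pseq r d n t = (b : ℕ) % pseq r d n t).card ≤ r * d := by
        intro a b hab
        refine le_trans (Finset.card_le_card ?_) (card_divides_le r d n
          (D := (b : ℕ) - (a : ℕ)) (by omega) (by have := b.2; omega))
        intro t ht
        rw [Finset.mem_filter] at ht ⊢
        refine ⟨ht.1, ?_⟩
        exact (Nat.modEq_iff_dvd' (le_of_lt hab)).mp ht.2.2
      rcases lt_or_gt_of_ne (fun h => hne (Fin.ext h) : (e : ℕ) ≠ (e' : ℕ)) with h | h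
      · exact key e e' h
      · refine le_trans (Finset.card_le_card ?_) (key e' e h)
        intro t ht
        rw [Finset.mem_filter] at ht ⊢
        exact ⟨ht.1, fun hh => ht.2.1 hh.symm, ht.2.2.symm⟩
    · push_neg at hne
      simp [hne]
  have hbadcard : bad.card ≤ r * r * (r * d) := by
    calc bad.card ≤ _ := Finset.card_le_card hsub
      _ ≤ ∑ ee ∈ (supp x) ×ˢ (supp x), _ := Finset.card_biUnion_le
      _ ≤ ∑ _ee ∈ (supp x) ×ˢ (supp x), r * d := Finset.sum_le_sum hpair
      _ = (supp x).card * (supp x).card * (r * d) := by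
          rw [Finset.sum_const, Finset.card_product, smul_eq_mul]
      _ = r * r * (r * d) := by rw [card_supp]
  have hT : r * r * (r * d) < TT r d := by rw [TT]; nlinarith
  have : (Finset.range (TT r d)).card ≤ bad.card + ((Finset.range (TT r d)).filter
      (fun t => goodSep r d n t x)).card := by
    rw [hbad]
    have := Finset.card_filter_add_card_filter_not
      (s := Finset.range (TT r d)) (p := fun t => goodSep r d n t x)
    omega
  rw [Finset.card_range] at this
  have hpos : 0 < ((Finset.range (TT r d)).filter (fun t => goodSep r d n t x)).card := by
    omega
  obtain ⟨t, ht⟩ := Finset.card_pos.mp hpos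
  rw [Finset.mem_filter, Finset.mem_range] at ht
  exact ⟨t, ht.1, ht.2⟩

end Construction2
section Construction3

/-- Shapes: a hash index and set of occupied cells. -/
abbrev ShapeT (r d n : ℕ) : Type :=
  Fin (TT r d) × {O : Finset (Fin (PP r d n)) // O.card = r}

noncomputable def shapeEquiv (r d n : ℕ) :
    ShapeT r d n ≃ Fin (Fintype.card (ShapeT r d n)) := Fintype.equivFin _

theorem card_shape_le (r d n : ℕ) :
    Fintype.card (ShapeT r d n) ≤ TT r d * (PP r d n) ^ r := by
  rw [Fintype.card_prod, Fintype.card_fin]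
  apply Nat.mul_le_mul_left
  calc Fintype.card {O : Finset (Fin (PP r d n)) // O.card = r}
      = (PP r d n).choose r := by rw [Fintype.card_finset_len, Fintype.card_fin]
    _ ≤ (PP r d n) ^ r := Nat.choose_le_pow _ _

/-- Selected hash index for `x`. -/
noncomputable def tsel (r d n : ℕ) (x : SparseVec n r) : ℕ :=
  Nat.find (sep_exists r d n x)

theorem tsel_lt (r d n : ℕ) (x : SparseVec n r) : tsel r d n x < TT r d :=
  (Nat.find_spec (sep_exists r d n x)).1

theorem tsel_good (r d n : ℕ) (x : SparseVec n r) : goodSep r d n (tsel r d n x) x :=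
  (Nat.find_spec (sep_exists r d n x)).2

/-- The selected prime for `x`. -/
noncomputable def pj (r d n : ℕ) (x : SparseVec n r) : ℕ := pseq r d n (tsel r d n x)

theorem pj_pos (r d n : ℕ) (x : SparseVec n r) : 0 < pj r d n x := by
  have := (pseq_spec r d n (tsel r d n x)).2.1
  have := (mpar_spec r d n).1
  rw [pj]; omega

theorem mod_pj_lt_PP (r d n : ℕ) (x : SparseVec n r) (a : ℕ) :
    a % pj r d n x < PP r d n :=
  lt_of_lt_of_le (Nat.mod_lt _ (pj_pos r d n x)) (pseq_le_PP r d n (tsel_lt r d n x))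

/-- The cell of a coordinate. -/
noncomputable def cellF (r d n : ℕ) (x : SparseVec n r) (e : Fin n) : Fin (PP r d n) :=
  ⟨(e : ℕ) % pj r d n x, mod_pj_lt_PP r d n x e⟩

/-- The set of occupied cells. -/
noncomputable def Ox (r d n : ℕ) (x : SparseVec n r) : Finset (Fin (PP r d n)) :=
  (supp x).image (cellF r d n x)

theorem cellF_injOn (r d n : ℕ) (x : SparseVec n r) :
    ∀ e ∈ supp x, ∀ e' ∈ supp x, cellF r d n x e = cellF r d n x e' → e = e' := by
  intro e he e' he' h
  by_contra hne
  exact tsel_good r d n x e he e' he' hne (congrArg Fin.val h)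

theorem card_Ox (r d n : ℕ) (x : SparseVec n r) : (Ox r d n x).card = r := by
  rw [Ox, Finset.card_image_of_injOn
    (fun e he e' he' h => cellF_injOn r d n x e he e' he' h), card_supp]

/-- Shape of a vector. -/
noncomputable def shapeOf (r d n : ℕ) (x : SparseVec n r) : ShapeT r d n :=
  (⟨tsel r d n x, tsel_lt r d n x⟩, ⟨Ox r d n x, card_Ox r d n x⟩)

/-- Shape index of a vector. -/
noncomputable def idxOf (r d n : ℕ) (x : SparseVec n r) : ℕ :=
  ((shapeEquiv r d n) (shapeOf r d n x) : ℕ)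

theorem idxOf_lt (r d n : ℕ) (x : SparseVec n r) :
    idxOf r d n x < Fintype.card (ShapeT r d n) :=
  ((shapeEquiv r d n) (shapeOf r d n x)).2

/-- Rank of a cell inside a cell set. -/
def rankIn {r d n : ℕ} (O : Finset (Fin (PP r d n))) (v : Fin (PP r d n)) : ℕ :=
  (O.filter fun u => u < v).card

theorem rankIn_lt_of_mem {r d n : ℕ} {O : Finset (Fin (PP r d n))} {v : Fin (PP r d n)}
    (hv : v ∈ O) (hO : O.card = r) : rankIn O v < r := by
  rw [rankIn]
  calc (O.filter fun u => u < v).card < O.card := by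
        apply Finset.card_lt_card
        constructor
        · exact Finset.filter_subset _ _
        · intro hsub
          have := hsub hv
          rw [Finset.mem_filter] at this
          exact absurd this.2 (lt_irrefl v)
    _ = r := hO

theorem rankIn_injOn {r d n : ℕ} {O : Finset (Fin (PP r d n))} {u v : Fin (PP r d n)}
    (hu : u ∈ O) (hv : v ∈ O) (h : rankIn O u = rankIn O v) : u = v := by
  have key : ∀ a b : Fin (PP r d n), a ∈ O → a < b → rankIn O a < rankIn O b := by
    intro a b ha hab
    rw [rankIn, rankIn]
    apply Finset.card_lt_card
    constructor
    · intro w hw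
      rw [Finset.mem_filter] at hw ⊢
      exact ⟨hw.1, hw.2.trans hab⟩
    · intro hsub
      have := hsub (Finset.mem_filter.mpr ⟨ha, hab⟩)
      rw [Finset.mem_filter] at this
      exact absurd this.2 (lt_irrefl a)
  rcases lt_trichotomy u v with hlt | he | hlt
  · exact absurd h (by have := key u v hu hlt; omega)
  · exact he
  · exact absurd h (by have := key v u hv hlt; omega)

end Construction3
section Construction4

/-- `k`-th digit of `q` in base `β`. -/
def digp (β k q : ℕ) : ℕ := q / β ^ k % β

theorem digp_lt {β : ℕ} (hβ : 0 < β) (k q : ℕ) : digp β k q < β :=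
  Nat.mod_lt _ hβ

theorem digits_determine {β : ℕ} (hβ : 0 < β) :
    ∀ (D a b : ℕ), a < β ^ D → b < β ^ D → (∀ k < D, digp β k a = digp β k b) → a = b := by
  intro D
  induction D with
  | zero => intro a b ha hb _; simp at ha hb; omega
  | succ D ih =>
      intro a b ha hb hdig
      have h0 : a % β = b % β := by
        have := hdig 0 (by omega)
        simpa [digp] using this
      have hshift : ∀ c k : ℕ, digp β k (c / β) = digp β (k + 1) c := by
        intro c k
        rw [digp, digp, Nat.div_div_eq_div_mul, ← pow_succ']
      have ha' : a / β < β ^ D := by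
        rw [Nat.div_lt_iff_lt_mul hβ, ← pow_succ]; exact ha
      have hb' : b / β < β ^ D := by
        rw [Nat.div_lt_iff_lt_mul hβ, ← pow_succ]; exact hb
      have hdig' : ∀ k < D, digp β k (a / β) = digp β k (b / β) := by
        intro k hk
        rw [hshift, hshift]
        exact hdig (k + 1) (by omega)
      have := ih (a / β) (b / β) ha' hb' hdig'
      rw [← Nat.div_add_mod a β, ← Nat.div_add_mod b β, this, h0]

theorem digits_determine' {β : ℕ} (hβ : 0 < β) {D a b : ℕ} (ha : a < β ^ D)
    (hb : b < β ^ D) (h : ∀ k < D, digp β k a = digp β k b) : a = b :=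
  digits_determine hβ D a b ha hb h

/-- base for the digit blocks -/
def βv (r d n : ℕ) : ℕ := (mpar r d n) ^ r

theorem βv_pos (r d n : ℕ) : 0 < βv r d n := by
  have := (mpar_spec r d n).1
  exact pow_pos (by omega) _

/-- body length -/
def Bv (r d n : ℕ) : ℕ := r * d * βv r d n

/-- The bit stored at position `pos` of the body. -/
noncomputable def bodyBit (r d n : ℕ) (x : SparseVec n r) (pos : ℕ) : Bool :=
  decide (∃ e ∈ supp x,
    rankIn (Ox r d n x) (cellF r d n x e) = pos / (d * βv r d n) ∧
    digp (βv r d n) (pos / βv r d n % d) ((e : ℕ) / pj r d n x) = pos % βv r d n)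

noncomputable def bodyF (r d n : ℕ) (x : SparseVec n r) : List Bool :=
  (List.range (Bv r d n)).map (bodyBit r d n x)

noncomputable def encF (r d n : ℕ) (x : SparseVec n r) : List Bool :=
  bodyF r d n x ++ List.replicate (idxOf r d n x + 1) false

theorem encF_length (r d n : ℕ) (x : SparseVec n r) :
    (encF r d n x).length = Bv r d n + (idxOf r d n x + 1) := by
  simp [encF, bodyF]

theorem encF_getD (r d n : ℕ) (x : SparseVec n r) {pos : ℕ} (h : pos < Bv r d n) :
    (encF r d n x).getD pos false = bodyBit r d n x pos := by
  have hlen : pos < (bodyF r d n x).length := by simpa [bodyF]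
  rw [encF, List.getD_append _ _ _ _ hlen, List.getD_eq_getElem _ _ hlen]
  simp [bodyF]

/-- Verification chain: check the digits of `q` one by one. -/
def chainT (off q β : ℕ) : ℕ → DTree
  | 0 => DTree.leaf true
  | (k+1) => DTree.node (off + k * β + digp β k q + 1) (DTree.leaf false) (chainT off q β k)

theorem chainT_depth (off q β : ℕ) : ∀ k, (chainT off q β k).depth = k := by
  intro k
  induction k with
  | zero => rfl
  | succ k ih => simp [chainT, DTree.depth, ih, Nat.add_comm]

theorem chainT_bounded {β ℓ : ℕ} (hβ : 0 < β) (off q : ℕ) :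
    ∀ k, off + k * β ≤ ℓ → (chainT off q β k).boundedBy ℓ := by
  intro k
  induction k with
  | zero => intro _; trivial
  | succ k ih =>
      intro hle
      have hdig := digp_lt hβ k q
      refine ⟨by omega, by nlinarith, trivial, ih (by nlinarith)⟩

theorem chainT_eval (w : List Bool) (off q β : ℕ) :
    ∀ k, ((chainT off q β k).eval w = true ↔
      ∀ k' < k, w.getD (off + k' * β + digp β k' q) false = true) := by
  intro k
  induction k with
  | zero => simp [chainT, DTree.eval]
  | succ k ih =>
      simp only [chainT, DTree.eval]
      have hpos : off + k * β + digp β k q + 1 - 1 = off + k * β + digp β k q := by omega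
      rw [hpos]
      by_cases hw : w.getD (off + k * β + digp β k q) false = true
      · rw [if_pos hw, ih]
        constructor
        · intro hall k' hk'
          rcases Nat.lt_succ_iff_lt_or_eq.mp hk' with h | h
          · exact hall k' h
          · subst h; exact hw
        · intro hall k' hk'
          exact hall k' (by omega)
      · rw [Bool.not_eq_true] at hw
        rw [hw]
        simp only [Bool.false_eq_true, if_false]
        constructor
        · intro h; exact absurd h (by simp [DTree.eval])
        · intro hall
          have ht := hall k (by omega)
          rw [ht] at hw
          exact absurd hw (by simp)

theorem pseq_pos (r d n : ℕ) (t : ℕ) : 0 < pseq r d n t := by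
  have := (pseq_spec r d n t).2.1
  have := (mpar_spec r d n).1
  omega

/-- Cell of a coordinate value under hash `t`. -/
noncomputable def cellD (r d n : ℕ) (t : Fin (TT r d)) (a : ℕ) : Fin (PP r d n) :=
  ⟨a % pseq r d n t, lt_of_lt_of_le (Nat.mod_lt _ (pseq_pos r d n t)) (pseq_le_PP r d n t.2)⟩

theorem cellF_eq_cellD (r d n : ℕ) (x : SparseVec n r) (e : Fin n) :
    cellF r d n x e = cellD r d n ⟨tsel r d n x, tsel_lt r d n x⟩ (e : ℕ) := rfl

/-- The decoding tree. -/
noncomputable def treeF (r d n : ℕ) (j : Fin n) (ℓ : ℕ) : DTree :=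
  if h : Bv r d n + 1 ≤ ℓ ∧ ℓ - Bv r d n - 1 < Fintype.card (ShapeT r d n) then
    (fun s : ShapeT r d n =>
      if hv : cellD r d n s.1 (j : ℕ) ∈ s.2.1 then
        chainT ((rankIn s.2.1 (cellD r d n s.1 (j : ℕ))) * (d * βv r d n))
          ((j : ℕ) / pseq r d n s.1) (βv r d n) d
      else DTree.leaf false)
    ((shapeEquiv r d n).symm ⟨ℓ - Bv r d n - 1, h.2⟩)
  else DTree.leaf false

theorem treeF_depth (r d n : ℕ) (j : Fin n) (ℓ : ℕ) :
    (treeF r d n j ℓ).depth ≤ d := by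
  rw [treeF]
  split
  · dsimp only
    split
    · rw [chainT_depth]
    · simp [DTree.depth]
  · simp [DTree.depth]

theorem treeF_bounded (r d n : ℕ) (j : Fin n) (ℓ : ℕ) :
    (treeF r d n j ℓ).boundedBy ℓ := by
  rw [treeF]
  split
  · rename_i h
    set s := (shapeEquiv r d n).symm ⟨ℓ - Bv r d n - 1, h.2⟩ with hs
    dsimp only
    split
    · rename_i hv
      apply chainT_bounded (βv_pos r d n)
      have hrank : rankIn s.2.1 (cellD r d n s.1 (j : ℕ)) < r := rankIn_lt_of_mem hv s.2.2
      have hineq : (rankIn s.2.1 (cellD r d n s.1 (j : ℕ))) * (d * βv r d n) + d * βv r d n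
          ≤ r * (d * βv r d n) := by
        calc (rankIn s.2.1 (cellD r d n s.1 (j : ℕ))) * (d * βv r d n) + d * βv r d n
            = (rankIn s.2.1 (cellD r d n s.1 (j : ℕ)) + 1) * (d * βv r d n) := by ring
          _ ≤ r * (d * βv r d n) := Nat.mul_le_mul_right _ (by omega)
      have hBv : r * (d * βv r d n) = Bv r d n := by rw [Bv]; ring
      omega
    · trivial
  · trivial

end Construction4
section Construction5

theorem pos_decomp {β dd : ℕ} (hβ : 0 < β) {i k v : ℕ} (hk : k < dd) (hv : v < β) :
    (i * (dd * β) + k * β + v) / (dd * β) = i ∧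
    (i * (dd * β) + k * β + v) / β % dd = k ∧
    (i * (dd * β) + k * β + v) % β = v := by
  have h1 : k * β + v < dd * β := by
    calc k * β + v < k * β + β := by omega
      _ = (k + 1) * β := by ring
      _ ≤ dd * β := Nat.mul_le_mul_right _ (by omega)
  refine ⟨?_, ?_, ?_⟩
  · have he : i * (dd * β) + k * β + v = (k * β + v) + i * (dd * β) := by ring
    rw [he, Nat.add_mul_div_right _ _ (Nat.mul_pos (by omega) hβ),
      Nat.div_eq_of_lt h1]
    omega
  · have he : i * (dd * β) + k * β + v = v + (k + i * dd) * β := by ring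
    rw [he, Nat.add_mul_div_right _ _ hβ, Nat.div_eq_of_lt hv]
    rw [show 0 + (k + i * dd) = k + i * dd by omega, Nat.add_mul_mod_self_right,
      Nat.mod_eq_of_lt hk]
  · have he : i * (dd * β) + k * β + v = v + (k + i * dd) * β := by ring
    rw [he, Nat.add_mul_mod_self_right, Nat.mod_eq_of_lt hv]

theorem pos_lt_B (r d n : ℕ) {i k v : ℕ} (hi : i < r) (hk : k < d) (hv : v < βv r d n) :
    i * (d * βv r d n) + k * βv r d n + v < Bv r d n := by
  have h1 : k * βv r d n + v < d * βv r d n := by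
    calc k * βv r d n + v < k * βv r d n + βv r d n := by omega
      _ = (k + 1) * βv r d n := by ring
      _ ≤ d * βv r d n := Nat.mul_le_mul_right _ (by omega)
  calc i * (d * βv r d n) + k * βv r d n + v < i * (d * βv r d n) + d * βv r d n := by omega
    _ = (i + 1) * (d * βv r d n) := by ring
    _ ≤ r * (d * βv r d n) := Nat.mul_le_mul_right _ (by omega)
    _ = Bv r d n := by rw [Bv]; ring

theorem q_lt (r d n : ℕ) (x : SparseVec n r) {a : ℕ} (ha : a < n) :
    a / pj r d n x < (βv r d n) ^ d := by
  have hm := (mpar_spec r d n).2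
  have hp := (pseq_spec r d n (tsel r d n x)).2.1
  have hppos := pj_pos r d n x
  rw [Nat.div_lt_iff_lt_mul hppos]
  have hβd : (βv r d n) ^ d = (mpar r d n) ^ (r * d) := by rw [βv, ← pow_mul]
  have hmp : mpar r d n < pj r d n x := hp
  calc a < n := ha
    _ ≤ (mpar r d n) ^ (r * d + 1) := hm
    _ = (mpar r d n) ^ (r * d) * mpar r d n := by rw [pow_succ]
    _ ≤ (mpar r d n) ^ (r * d) * pj r d n x := Nat.mul_le_mul_left _ (by omega)
    _ = (βv r d n) ^ d * pj r d n x := by rw [hβd]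

theorem codeF_correct (r d n : ℕ) (x : SparseVec n r) (j : Fin n) :
    (treeF r d n j (encF r d n x).length).eval (encF r d n x) = x.1 j := by
  have hm2 := (mpar_spec r d n).1
  have hβ : 0 < βv r d n := βv_pos r d n
  have hlen : (encF r d n x).length = Bv r d n + (idxOf r d n x + 1) := encF_length r d n x
  have hidx := idxOf_lt r d n x
  have hcond : Bv r d n + 1 ≤ (encF r d n x).length ∧
      (encF r d n x).length - Bv r d n - 1 < Fintype.card (ShapeT r d n) := by omega
  rw [treeF, dif_pos hcond]
  have hfin : (⟨(encF r d n x).length - Bv r d n - 1, hcond.2⟩ :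
      Fin (Fintype.card (ShapeT r d n))) = shapeEquiv r d n (shapeOf r d n x) := by
    apply Fin.ext
    rw [Fin.val_mk]
    have : idxOf r d n x = ((shapeEquiv r d n) (shapeOf r d n x) : ℕ) := rfl
    omega
  rw [hfin, Equiv.symm_apply_apply]
  simp only [shapeOf]
  have hc1 : cellD r d n ⟨tsel r d n x, tsel_lt r d n x⟩ (j : ℕ) = cellF r d n x j := rfl
  have hc2 : pseq r d n (tsel r d n x) = pj r d n x := rfl
  simp only [hc1, hc2]
  by_cases hv : cellF r d n x j ∈ Ox r d n x
  · rw [dif_pos hv]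
    obtain ⟨e₀, he₀, hce₀⟩ := Finset.mem_image.mp hv
    have hiOx : rankIn (Ox r d n x) (cellF r d n x j) < r :=
      rankIn_lt_of_mem hv (card_Ox r d n x)
    -- characterize the body bits probed by the chain
    have hbody : ∀ k, k < d →
        (bodyBit r d n x
          (rankIn (Ox r d n x) (cellF r d n x j) * (d * βv r d n) + k * βv r d n +
            digp (βv r d n) k ((j : ℕ) / pj r d n x)) = true ↔
          digp (βv r d n) k ((e₀ : ℕ) / pj r d n x) =
            digp (βv r d n) k ((j : ℕ) / pj r d n x)) := by
      intro k hk
      have hdig := digp_lt hβ k ((j : ℕ) / pj r d n x)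
      obtain ⟨hdv, hmd, hmb⟩ := pos_decomp hβ hk hdig
        (i := rankIn (Ox r d n x) (cellF r d n x j))
      rw [bodyBit, decide_eq_true_eq, hdv, hmd, hmb]
      constructor
      · rintro ⟨e, he, hrank, hdigeq⟩
        have hcc : cellF r d n x e = cellF r d n x j :=
          rankIn_injOn (Finset.mem_image_of_mem _ he) hv hrank
        have hee : e = e₀ := cellF_injOn r d n x e he e₀ he₀ (hcc.trans hce₀.symm)
        rw [← hee]
        exact hdigeq
      · intro hdigeq
        exact ⟨e₀, he₀, by rw [hce₀], hdigeq⟩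
    have hgetD : ∀ k, k < d →
        (encF r d n x).getD
          (rankIn (Ox r d n x) (cellF r d n x j) * (d * βv r d n) + k * βv r d n +
            digp (βv r d n) k ((j : ℕ) / pj r d n x)) false =
        bodyBit r d n x
          (rankIn (Ox r d n x) (cellF r d n x j) * (d * βv r d n) + k * βv r d n +
            digp (βv r d n) k ((j : ℕ) / pj r d n x)) := by
      intro k hk
      exact encF_getD r d n x (pos_lt_B r d n hiOx hk (digp_lt hβ k _))
    have heval : (chainT (rankIn (Ox r d n x) (cellF r d n x j) * (d * βv r d n))
        ((j : ℕ) / pj r d n x) (βv r d n) d).eval (encF r d n x) = true ↔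
        ∀ k < d, digp (βv r d n) k ((e₀ : ℕ) / pj r d n x) =
          digp (βv r d n) k ((j : ℕ) / pj r d n x) := by
      rw [chainT_eval]
      constructor
      · intro hall k hk
        have h1 := hall k hk
        rw [hgetD k hk, hbody k hk] at h1
        exact h1
      · intro hall k hk
        rw [hgetD k hk, hbody k hk]
        exact hall k hk
    by_cases hxj : x.1 j = true
    · have hjsupp : j ∈ supp x := mem_supp.mpr hxj
      have hej : e₀ = j := cellF_injOn r d n x e₀ he₀ j hjsupp hce₀
      rw [hxj]
      exact heval.mpr (fun k hk => by rw [hej])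
    · have hxjf : x.1 j = false := by revert hxj; cases x.1 j <;> simp
      rw [hxjf, Bool.eq_false_iff]
      intro htrue
      have hall := heval.mp htrue
      have hq1 : (e₀ : ℕ) / pj r d n x < (βv r d n) ^ d := q_lt r d n x e₀.2
      have hq2 : (j : ℕ) / pj r d n x < (βv r d n) ^ d := q_lt r d n x j.2
      have hdiv : (e₀ : ℕ) / pj r d n x = (j : ℕ) / pj r d n x :=
        digits_determine' hβ hq1 hq2 hall
      have hmod : (e₀ : ℕ) % pj r d n x = (j : ℕ) % pj r d n x :=
        congrArg Fin.val hce₀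
      have : (e₀ : ℕ) = (j : ℕ) := by
        rw [← Nat.div_add_mod (e₀ : ℕ) (pj r d n x), ← Nat.div_add_mod (j : ℕ) (pj r d n x),
          hdiv, hmod]
      have : e₀ = j := Fin.ext this
      rw [← this] at hxjf
      rw [mem_supp.mp he₀] at hxjf
      exact absurd hxjf (by simp)
  · rw [dif_neg hv]
    have : x.1 j = false := by
      by_contra h
      rw [Bool.not_eq_false] at h
      exact hv (Finset.mem_image_of_mem _ (mem_supp.mpr h))
    rw [this]
    rfl

end Construction5
section CodeBundle

/-- The locally decodable source code. -/
noncomputable def codeF (r d n : ℕ) : AdaptiveLDC r d n where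
  enc := encF r d n
  enc_inj := by
    intro x x' h
    apply Subtype.ext
    funext j
    have h1 := codeF_correct r d n x j
    have h2 := codeF_correct r d n x' j
    rw [h] at h1
    rw [h1] at h2
    exact h2
  tree := treeF r d n
  depth_le := fun j ℓ => treeF_depth r d n j ℓ
  bounded := treeF_bounded r d n
  correct := codeF_correct r d n

theorem expLenA_nonneg {r d n : ℕ} (c : AdaptiveLDC r d n) : 0 ≤ expLenA c := by
  rw [expLenA]
  apply div_nonneg
  · apply Finset.sum_nonneg
    intro x _
    positivity
  · positivity

theorem expLenA_codeF_le (r d n : ℕ) :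
    expLenA (codeF r d n) ≤ ((Bv r d n + TT r d * (PP r d n) ^ r : ℕ) : ℝ) := by
  classical
  rw [expLenA]
  rcases Nat.eq_zero_or_pos (n.choose r) with h0 | hpos
  · rw [h0]
    simp
    positivity
  · rw [div_le_iff₀ (by exact_mod_cast hpos)]
    have hlen : ∀ x : SparseVec n r,
        (encF r d n x).length ≤ Bv r d n + TT r d * (PP r d n) ^ r := by
      intro x
      have h1 : (encF r d n x).length = Bv r d n + (idxOf r d n x + 1) :=
        encF_length r d n x
      have h2 : idxOf r d n x + 1 ≤ Fintype.card (ShapeT r d n) := idxOf_lt r d n x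
      have h3 := card_shape_le r d n
      omega
    show ∑ x : SparseVec n r, ((encF r d n x).length : ℝ) ≤ _
    calc ∑ x : SparseVec n r, ((encF r d n x).length : ℝ)
        ≤ ∑ _x : SparseVec n r, ((Bv r d n + TT r d * (PP r d n) ^ r : ℕ) : ℝ) := by
          apply Finset.sum_le_sum
          intro x _
          exact_mod_cast hlen x
      _ = (Fintype.card (SparseVec n r) : ℝ) * ((Bv r d n + TT r d * (PP r d n) ^ r : ℕ) : ℝ) := by
          rw [Finset.sum_const, nsmul_eq_mul, Fintype.card]
      _ = _ := by rw [card_sparseVec]; ring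

end CodeBundle

/-- For fixed `r, d`, the optimal expected length of adaptive `(r,d,n)`-locally decodable
codes scales as `Θ(n^{r/(rd+1)})`. -/
theorem fixed_r_d_scaling (r d : ℕ) (hr : 1 ≤ r) (hd : 1 ≤ d) :
    ∃ c1 c2 : ℝ, 0 < c1 ∧ 0 < c2 ∧ ∀ᶠ n : ℕ in atTop,
      c1 * (n : ℝ) ^ ((r : ℝ) / (r * d + 1 : ℝ)) ≤
          sInf {L : ℝ | ∃ c : AdaptiveLDC r d n, expLenA c = L} ∧
      sInf {L : ℝ | ∃ c : AdaptiveLDC r d n, expLenA c = L} ≤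
          c2 * (n : ℝ) ^ ((r : ℝ) / (r * d + 1 : ℝ)) := by
  classical
  have hk1 : 1 ≤ r * d := Nat.mul_le_mul hr hd
  set α : ℝ := (r : ℝ) / ((r : ℝ) * (d : ℝ) + 1) with hαdef
  have hden : (0:ℝ) < (r : ℝ) * (d : ℝ) + 1 := by positivity
  have hαpos : 0 < α := by
    apply div_pos _ hden
    exact_mod_cast hr
  have hkr : ((r * d : ℕ) : ℝ) + 1 = (r : ℝ) * (d : ℝ) + 1 := by push_cast; ring
  have hαmul : α * (((r * d : ℕ) : ℝ) + 1) = (r : ℝ) := by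
    rw [hkr, hαdef]
    field_simp
  -- constants
  set C3 : ℕ := r * d + TT r d * 2 ^ (TT r d * r) with hC3
  have hC3pos : 0 < C3 := by positivity
  set C4 : ℕ := 2 ^ (r * d + 1 + r) * r.factorial with hC4
  have hC4pos : 0 < C4 := by positivity
  have hC4posR : (0:ℝ) < (C4 : ℝ) := by exact_mod_cast hC4pos
  refine ⟨1 / (4 * (C4 : ℝ)), (C3 : ℝ) * 2 ^ r + 1, by positivity, by positivity, ?_⟩
  have hev3 : ∀ᶠ n : ℕ in atTop, (2 * (C4:ℝ)) ≤ (n : ℝ) ^ α := by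
    have h1 : Filter.Tendsto (fun n : ℕ => ((n : ℝ)) ^ α) atTop atTop :=
      (tendsto_rpow_atTop hαpos).comp tendsto_natCast_atTop_atTop
    exact h1.eventually_ge_atTop _
  filter_upwards [Filter.eventually_ge_atTop (2 * r),
    Filter.eventually_ge_atTop (2 ^ (r * d + 1)), hev3] with n hn1 hn2 hn3
  have h2k : 2 ≤ 2 ^ (r * d + 1) := by
    calc 2 = 2 ^ 1 := rfl
    _ ≤ 2 ^ (r * d + 1) := Nat.pow_le_pow_right (by omega) (by omega)
  have hn0 : 2 ≤ n := le_trans h2k hn2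
  have hrn : r ≤ n := by omega
  have hchoose_pos : 0 < n.choose r := Nat.choose_pos hrn
  have hnR1 : (1:ℝ) ≤ (n:ℝ) := by exact_mod_cast (by omega : 1 ≤ n)
  set S : Set ℝ := {L | ∃ c : AdaptiveLDC r d n, expLenA c = L} with hS
  have hSne : S.Nonempty := ⟨_, codeF r d n, rfl⟩
  have hSbdd : BddBelow S := ⟨0, fun L hL => by
    obtain ⟨c, rfl⟩ := hL
    exact expLenA_nonneg c⟩
  have hnα_nonneg : (0:ℝ) ≤ (n:ℝ)^α := Real.rpow_nonneg (by positivity) _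
  constructor
  · -- LOWER BOUND
    apply le_csInf hSne
    rintro L ⟨c, rfl⟩
    set X : ℝ := (n:ℝ) ^ α with hX
    set t : ℕ := ⌊X / (C4 : ℝ)⌋₊ with ht
    have hXpos : 0 < X := by
      have : (0:ℝ) < 2 * C4 := by positivity
      linarith
    have htreal : (t : ℝ) ≤ X / C4 := Nat.floor_le (by positivity)
    have ht1 : 1 ≤ t := by
      rw [ht]
      apply Nat.le_floor
      rw [Nat.cast_one, le_div_iff₀ hC4posR]
      linarith
    have ht0R : (0:ℝ) ≤ (t:ℝ) := by positivity
    -- key Nat inequality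
    have hkey : 2 * (t * (2 * t) ^ (r * d)) ≤ n.choose r := by
      have hfact_pos : (0:ℝ) < (r.factorial : ℝ) := by exact_mod_cast r.factorial_pos
      have hXpow : X ^ (r * d + 1) = (n:ℝ) ^ (r : ℕ) := by
        rw [hX, ← Real.rpow_natCast ((n:ℝ)^α) (r*d+1), ← Real.rpow_mul (by positivity)]
        rw [show ((r*d+1 : ℕ) : ℝ) = ((r*d : ℕ):ℝ) + 1 by push_cast; ring, hαmul]
        rw [Real.rpow_natCast]
      have hreal : ((2 * (t * (2 * t) ^ (r * d)) : ℕ) : ℝ) ≤ ((n.choose r : ℕ) : ℝ) := by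
        push_cast
        have e1 : (2:ℝ) * ((t:ℝ) * (2 * (t:ℝ)) ^ (r * d)) =
            2 ^ (r * d + 1) * (t:ℝ) ^ (r * d + 1) := by
          rw [mul_pow]
          ring
        rw [e1]
        have e2 : (t:ℝ) ^ (r * d + 1) ≤ (X / C4) ^ (r * d + 1) :=
          pow_le_pow_left₀ ht0R htreal _
        have hC4pow : ((C4:ℝ)) ^ (r * d + 1) ≥ (C4 : ℝ) :=
          le_self_pow₀ (by exact_mod_cast hC4pos) (by omega)
        have e3 : (X / C4) ^ (r * d + 1) = X ^ (r*d+1) / (C4:ℝ) ^ (r*d+1) := div_pow _ _ _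
        have e4 : X ^ (r*d+1) / (C4:ℝ) ^ (r*d+1) ≤ X ^ (r*d+1) / (C4:ℝ) := by
          apply div_le_div_of_nonneg_left (by positivity) hC4posR hC4pow
        have hC4val : (C4 : ℝ) = 2 ^ (r*d+1) * (2 ^ r * r.factorial) := by
          rw [hC4]; push_cast; ring
        calc 2 ^ (r * d + 1) * (t:ℝ) ^ (r * d + 1)
            ≤ 2 ^ (r * d + 1) * (X ^ (r*d+1) / (C4:ℝ)) := by
              have := le_trans e2 (le_of_eq e3)
              have := le_trans this e4
              exact mul_le_mul_of_nonneg_left this (by positivity)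
          _ = X ^ (r*d+1) / (2 ^ r * r.factorial) := by
              rw [hC4val]
              have h2p : ((2:ℝ) ^ (r*d+1)) ≠ 0 := by positivity
              field_simp
          _ = (n:ℝ) ^ (r:ℕ) / (2 ^ r * r.factorial) := by rw [hXpow]
          _ = ((n:ℝ)/2) ^ (r:ℕ) / (r.factorial : ℝ) := by
              rw [div_pow]
              ring
          _ ≤ (((n + 1 - r : ℕ) : ℝ)) ^ (r:ℕ) / (r.factorial : ℝ) := by
              have hc : ((n + 1 - r : ℕ) : ℝ) = (n:ℝ) + 1 - r := by
                rw [Nat.cast_sub (by omega : r ≤ n + 1)]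
                push_cast
                ring
              have h2r : (2*(r:ℝ)) ≤ (n:ℝ) := by exact_mod_cast hn1
              have hr1 : (1:ℝ) ≤ (r:ℝ) := by exact_mod_cast hr
              have hhalf : (n:ℝ)/2 ≤ ((n + 1 - r : ℕ) : ℝ) := by
                rw [hc]
                linarith
              gcongr
          _ ≤ ((n.choose r : ℕ) : ℝ) := by
              have := Nat.pow_le_choose (α := ℝ) r n
              push_cast at this ⊢
              exact this
      exact_mod_cast hreal
    have hlb := expLenA_lower c t ht1 hkey
    have hgoal : 1 / (4 * (C4:ℝ)) * X ≤ (t:ℝ)/2 := by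
      have hfl := Nat.lt_floor_add_one (X / (C4:ℝ))
      have hsplit : X / (C4:ℝ) = 2 * (X / (2 * C4)) := by
        field_simp
      have h1le : 1 ≤ X / (2 * (C4:ℝ)) := by
        rw [le_div_iff₀ (by positivity)]
        linarith
      have htge : X / (2 * (C4:ℝ)) ≤ (t:ℝ) := by
        rw [ht]
        have := Nat.lt_floor_add_one (X / (C4:ℝ))
        have hfloor : X / (C4:ℝ) - 1 < (⌊X / (C4:ℝ)⌋₊ : ℝ) := by
          have := Nat.lt_floor_add_one (X / (C4:ℝ))
          linarith [Nat.sub_one_lt_floor (X / (C4:ℝ))]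
        linarith [hsplit, h1le, hfloor]
      calc 1 / (4 * (C4:ℝ)) * X = (X / (2 * C4)) / 2 := by ring
        _ ≤ (t:ℝ)/2 := by linarith
    linarith
  · -- UPPER BOUND
    have hmem : expLenA (codeF r d n) ∈ S := ⟨codeF r d n, rfl⟩
    have h1 := csInf_le hSbdd hmem
    have h2 := expLenA_codeF_le r d n
    -- bound mpar
    set μ : ℝ := (n:ℝ) ^ ((1:ℝ) / (((r*d : ℕ):ℝ) + 1)) with hμ
    have hμ1 : (1:ℝ) ≤ μ := by
      rw [hμ]
      exact Real.one_le_rpow hnR1 (by positivity)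
    have hμpow : μ ^ (r * d + 1) = (n:ℝ) := by
      rw [hμ, ← Real.rpow_natCast ((n:ℝ) ^ _) (r*d+1), ← Real.rpow_mul (by positivity)]
      rw [show ((r*d+1 : ℕ) : ℝ) = ((r*d : ℕ):ℝ) + 1 by push_cast; ring]
      rw [one_div, inv_mul_cancel₀ (by positivity), Real.rpow_one]
    set m' : ℕ := ⌈μ⌉₊ with hm'
    have hμm' : μ ≤ (m' : ℝ) := Nat.le_ceil μ
    have h2m' : 2 ≤ m' := by
      rw [hm']
      have h1n : (1:ℝ) < (n:ℝ) := by exact_mod_cast (by omega : 1 < n)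
      have : (1:ℝ) < μ := by
        rw [hμ]
        apply Real.one_lt_rpow_iff_of_pos (by positivity) |>.mpr
        exact Or.inl ⟨h1n, by positivity⟩
      have := Nat.lt_ceil.mpr (by exact_mod_cast this : ((1:ℕ):ℝ) < μ)
      omega
    have hnm' : n ≤ m' ^ (r * d + 1) := by
      have hreal : (n:ℝ) ≤ ((m' : ℕ):ℝ) ^ (r*d+1) := by
        rw [← hμpow]
        exact pow_le_pow_left₀ (by linarith) hμm' _
      exact_mod_cast hreal
    have hmle : mpar r d n ≤ m' := mpar_min r d n m' h2m' hnm'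
    have hmleR : (mpar r d n : ℝ) ≤ 2 * μ := by
      have hceil : (m' : ℝ) < μ + 1 := Nat.ceil_lt_add_one (by positivity)
      have : (mpar r d n : ℝ) ≤ (m' : ℝ) := by exact_mod_cast hmle
      linarith
    -- Lmax as C3 * m^r
    have hLmax : (Bv r d n + TT r d * (PP r d n) ^ r : ℕ) = C3 * (mpar r d n) ^ r := by
      rw [hC3, Bv, βv, PP]
      ring
    have hμr : μ ^ (r : ℕ) = (n:ℝ) ^ α := by
      rw [hμ, ← Real.rpow_natCast ((n:ℝ) ^ _) r, ← Real.rpow_mul (by positivity)]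
      congr 1
      rw [hkr, hαdef]
      field_simp
    have hfinal : ((Bv r d n + TT r d * (PP r d n) ^ r : ℕ) : ℝ) ≤
        ((C3:ℝ) * 2 ^ r + 1) * (n:ℝ) ^ α := by
      rw [hLmax]
      push_cast
      calc (C3:ℝ) * (mpar r d n : ℝ) ^ r ≤ (C3:ℝ) * (2 * μ) ^ r := by
            apply mul_le_mul_of_nonneg_left _ (by positivity)
            exact pow_le_pow_left₀ (by positivity) hmleR _
        _ = (C3:ℝ) * 2 ^ r * μ ^ r := by rw [mul_pow]; ring
        _ = (C3:ℝ) * 2 ^ r * (n:ℝ) ^ α := by rw [hμr]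
        _ ≤ ((C3:ℝ) * 2 ^ r + 1) * (n:ℝ) ^ α := by
            apply mul_le_mul_of_nonneg_right _ hnα_nonneg
            linarith
    calc sInf S ≤ expLenA (codeF r d n) := h1
      _ ≤ _ := h2
      _ ≤ _ := hfinal
end

section
/- Let c be an adaptive (r,d,n)-locally decodable source code for positive integers 1 ≤ r ≤ n/2 and d ≥ 1. Then for every positive integer k, the number of r-sparse binary vectors x of length n whose codeword c(x) has length exactly k is at most max_{0 ≤ v ≤ rd} C(2k, v), where C(2k,v) is the binomial coefficient 2k choose v. -/
open Filter MeasureTheory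

namespace DTree

/-- The set of positions probed by a tree on a given word. -/
def probes : DTree → List Bool → Finset ℕ
  | .leaf _, _ => ∅
  | .node p l h, w => insert p (if w.getD (p-1) false then probes h w else probes l w)

@[simp] lemma probes_leaf (b : Bool) (w : List Bool) : probes (.leaf b) w = ∅ := rfl

@[simp] lemma probes_node (p : ℕ) (l h : DTree) (w : List Bool) :
    probes (.node p l h) w
      = insert p (if w.getD (p-1) false then probes h w else probes l w) := rfl

@[simp] lemma depth_leaf (b : Bool) : depth (.leaf b) = 0 := rfl

@[simp] lemma depth_node (p : ℕ) (l h : DTree) :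
    depth (.node p l h) = 1 + max l.depth h.depth := rfl

lemma eval_node (p : ℕ) (l h : DTree) (w : List Bool) :
    eval w (.node p l h) = if w.getD (p-1) false then eval w h else eval w l := rfl

lemma card_probes_le (t : DTree) (w : List Bool) : (probes t w).card ≤ t.depth := by
  induction t with
  | leaf b => simp
  | node p l h ihl ihh =>
    by_cases hb : w.getD (p-1) false
    · simp only [probes_node, depth_node, hb, if_true]
      have := Finset.card_insert_le p (probes h w)
      omega
    · simp only [probes_node, depth_node, hb, Bool.false_eq_true, if_false]
      have := Finset.card_insert_le p (probes l w)
      omega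

lemma probes_subset (t : DTree) (w : List Bool) (ℓ : ℕ) (hb : t.boundedBy ℓ) :
    probes t w ⊆ Finset.Icc 1 ℓ := by
  induction t with
  | leaf b => simp
  | node p l h ihl ihh =>
    obtain ⟨h1, h2, h3, h4⟩ := hb
    by_cases hw : w.getD (p-1) false
    · simp only [probes_node, hw, if_true]
      exact Finset.insert_subset (Finset.mem_Icc.mpr ⟨h1, h2⟩) (ihh h4)
    · simp only [probes_node, hw, if_false]
      exact Finset.insert_subset (Finset.mem_Icc.mpr ⟨h1, h2⟩) (ihl h3)

lemma eval_agree (t : DTree) (w w' : List Bool) (V : Finset ℕ)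
    (hV : ∀ p ∈ V, w.getD (p-1) false = w'.getD (p-1) false)
    (hp : probes t w ⊆ V) : t.eval w' = t.eval w := by
  induction t with
  | leaf b => rfl
  | node p l h ihl ihh =>
    have hpV : p ∈ V := hp (by simp only [probes_node]; exact Finset.mem_insert_self _ _)
    have hbit := hV p hpV
    by_cases hb : w.getD (p-1) false
    · have hb' : w'.getD (p-1) false = true := by rw [← hbit]; exact hb
      simp only [eval_node, hb, hb', if_true]
      exact ihh (fun q hq => hp (by
        simp only [probes_node, hb, if_true]; exact Finset.mem_insert_of_mem hq))
    · have hb' : w'.getD (p-1) false = false := by rw [← hbit]; simpa using hb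
      simp only [eval_node, hb, hb', if_false, Bool.false_eq_true]
      exact ihl (fun q hq => hp (by
        simp only [probes_node, hb, if_false]; exact Finset.mem_insert_of_mem hq))

end DTree

/-- The number of `r`-sparse source vectors whose codeword has length exactly `k` is at
most `max_{0 ≤ v ≤ rd} C(2k, v)`. -/
theorem codewords_per_length_bound (r d n : ℕ) (hr : 1 ≤ r) (hd : 1 ≤ d) (hrn : 2 * r ≤ n)
    (c : AdaptiveLDC r d n) (k : ℕ) (hk : 1 ≤ k) :
    (Finset.univ.filter fun x : SparseVec n r => (c.enc x).length = k).card ≤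
      (Finset.range (r * d + 1)).sup fun v => (2 * k).choose v := by
  classical
  set S := Finset.univ.filter fun x : SparseVec n r => (c.enc x).length = k with hS
  set v : ℕ := min (r * d) k with hv
  -- the union of probed positions on one-coordinates
  set U : SparseVec n r → Finset ℕ := fun x =>
    if (c.enc x).length = k then
      (Finset.univ.filter fun j => x.1 j = true).biUnion
        (fun j => DTree.probes (c.tree j k) (c.enc x))
    else ∅ with hU
  have hUsub : ∀ x, U x ⊆ Finset.Icc 1 k := by
    intro x
    simp only [hU]
    split
    · exact Finset.biUnion_subset.mpr fun j _ =>
        DTree.probes_subset _ _ _ (c.bounded j k)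
    · simp
  have hUcard : ∀ x, (U x).card ≤ v := by
    intro x
    have h1 : (U x).card ≤ r * d := by
      simp only [hU]
      split
      · refine le_trans (Finset.card_biUnion_le) ?_
        have hb := Finset.sum_le_card_nsmul
          (Finset.univ.filter fun j => x.1 j = true)
          (fun j => (DTree.probes (c.tree j k) (c.enc x)).card) d
          (fun j _ => le_trans (DTree.card_probes_le _ _) (c.depth_le j k))
        rw [smul_eq_mul] at hb
        have hcardr : (Finset.univ.filter fun j => x.1 j = true).card = r := x.2
        rw [hcardr] at hb
        exact hb
      · simp
    have h2 : (U x).card ≤ k := le_trans (Finset.card_le_card (hUsub x)) (by simp)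
    omega
  have hvk : v ≤ (Finset.Icc 1 k).card := by simp [hv]
  obtain ⟨V, hV⟩ : ∃ V : SparseVec n r → Finset ℕ,
      ∀ x, U x ⊆ V x ∧ V x ⊆ Finset.Icc 1 k ∧ (V x).card = v := by
    choose V a b c' using fun x =>
      Finset.exists_subsuperset_card_eq (hUsub x) (hUcard x) hvk
    exact ⟨V, fun x => ⟨a x, b x, c' x⟩⟩
  set φ : SparseVec n r → Finset (ℕ × Bool) := fun x =>
    (V x).image (fun p => (p, (c.enc x).getD (p-1) false)) with hφ
  have hφcard : ∀ x, (φ x).card = v := by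
    intro x
    rw [hφ]
    rw [Finset.card_image_of_injOn (fun p _ q _ h => congrArg Prod.fst h)]
    exact (hV x).2.2
  have key : S.card ≤ ((Finset.Icc 1 k ×ˢ (Finset.univ : Finset Bool)).powersetCard v).card := by
    apply Finset.card_le_card_of_injOn φ
    · intro x hx
      rw [Finset.mem_coe, Finset.mem_powersetCard]
      refine ⟨?_, hφcard x⟩
      intro pb hpb
      simp only [hφ, Finset.mem_image] at hpb
      obtain ⟨p, hp, rfl⟩ := hpb
      exact Finset.mem_product.mpr ⟨(hV x).2.1 hp, Finset.mem_univ _⟩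
    · intro x hx y hy hxy
      simp only [hS, Finset.mem_coe, Finset.mem_filter] at hx hy
      have hVeq : V x = V y := by
        apply Finset.eq_of_subset_of_card_le
        · intro p hp
          have : (p, (c.enc x).getD (p-1) false) ∈ φ y := by
            rw [← hxy]; exact Finset.mem_image_of_mem _ hp
          simp only [hφ, Finset.mem_image] at this
          obtain ⟨q, hq, hq2⟩ := this
          rw [Prod.mk.injEq] at hq2
          obtain ⟨rfl, h2⟩ := hq2
          exact hq
        · rw [(hV x).2.2, (hV y).2.2]
      have hagree : ∀ p ∈ V x, (c.enc x).getD (p-1) false = (c.enc y).getD (p-1) false := by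
        intro p hp
        have : (p, (c.enc x).getD (p-1) false) ∈ φ y := by
          rw [← hxy]; exact Finset.mem_image_of_mem _ hp
        simp only [hφ, Finset.mem_image] at this
        obtain ⟨q, hq, hq2⟩ := this
        rw [Prod.mk.injEq] at hq2
        obtain ⟨rfl, h2⟩ := hq2
        exact h2.symm
      -- one-coordinates transfer
      have main : ∀ a b : SparseVec n r, V a = V b →
          (∀ p ∈ V a, (c.enc a).getD (p-1) false = (c.enc b).getD (p-1) false) →
          (c.enc a).length = k → (c.enc b).length = k →
          ∀ j : Fin n, a.1 j = true → b.1 j = true := by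
        intro a b hVab hag ha hb j hj
        have hprobe : DTree.probes (c.tree j k) (c.enc a) ⊆ V a := by
          refine le_trans ?_ (hV a).1
          simp only [hU, ha, if_true]
          exact Finset.subset_biUnion_of_mem
            (fun j => DTree.probes (c.tree j k) (c.enc a))
            (Finset.mem_filter.mpr ⟨Finset.mem_univ _, hj⟩)
        have := DTree.eval_agree (c.tree j k) (c.enc a) (c.enc b) (V a) hag hprobe
        have hca := c.correct a j
        have hcb := c.correct b j
        rw [ha] at hca
        rw [hb] at hcb
        rw [← hcb, this, hca, hj]
      have hxyj : ∀ j : Fin n, x.1 j = y.1 j := by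
        intro j
        cases hxj : x.1 j with
        | true => exact (main x y hVeq hagree hx.2 hy.2 j hxj).symm
        | false =>
          cases hyj : y.1 j with
          | false => rfl
          | true =>
            have hag' : ∀ p ∈ V y, (c.enc y).getD (p-1) false = (c.enc x).getD (p-1) false := by
              intro p hp
              rw [← hVeq] at hp
              exact (hagree p hp).symm
            have := main y x hVeq.symm hag' hy.2 hx.2 j hyj
            exact absurd this (by simp [hxj])
      exact Subtype.ext (funext hxyj)
  rw [Finset.card_powersetCard] at key
  have hcard : (Finset.Icc 1 k ×ˢ (Finset.univ : Finset Bool)).card = 2 * k := by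
    simp [Finset.card_product, mul_comm]
  rw [hcard] at key
  refine le_trans key ?_
  exact Finset.le_sup (f := fun v => (2 * k).choose v)
    (Finset.mem_range.mpr (by omega))
end

section
/- Let U be a finite set of cardinality u, and let 𝒜 be a family of subsets of U such that no member of 𝒜 is a subset of another member, and every member of 𝒜 has cardinality at most v. Then |𝒜| ≤ max_{0 ≤ i ≤ v} C(u, i), where C(u,i) is the binomial coefficient u choose i. -/
open Finset Nat

lemma antichain_card_le_aux {α : Type*} [DecidableEq α] [Fintype α]
    (𝒜 : Finset (Finset α)) (v : ℕ)
    (hanti : IsAntichain (· ⊆ ·) (𝒜 : Set (Finset α)))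
    (hcard : ∀ A ∈ 𝒜, A.card ≤ v) :
    𝒜.card ≤ (Finset.range (v + 1)).sup fun i => (Fintype.card α).choose i := by
  set n := Fintype.card α
  set M := (Finset.range (v + 1)).sup fun i => n.choose i with hM
  have hMpos : 0 < M := by
    have : n.choose 0 ≤ M := le_sup (by simp)
    simpa using lt_of_lt_of_le (by simp [Nat.choose_zero_right]) this
  suffices h : (∑ r ∈ Iic n, (#(𝒜 # r) : ℚ) / M) ≤ 1 by
    rw [← sum_div, ← Nat.cast_sum, div_le_one (by positivity)] at h
    rw [sum_card_slice] at h
    exact_mod_cast h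
  rw [Iic_eq_Icc, ← Ico_add_one_right_eq_Icc, bot_eq_zero, Ico_zero_eq_range]
  refine (sum_le_sum fun r hr => ?_).trans (sum_card_slice_div_choose_le_one hanti)
  rw [mem_range, Nat.lt_add_one_iff] at hr
  rcases le_or_gt r v with hrv | hrv
  · have hch : (0:ℚ) < n.choose r := by exact_mod_cast Nat.choose_pos hr
    have hle : (n.choose r : ℚ) ≤ M := by
      exact_mod_cast le_sup (f := fun i => n.choose i) (mem_range.2 (Nat.lt_succ_of_le hrv))
    exact div_le_div_of_nonneg_left (by positivity) hch hle
  · have : 𝒜 # r = ∅ := by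
      ext A
      simp only [mem_slice, notMem_empty, iff_false, not_and]
      intro hA hAr
      exact absurd (hcard A hA) (by omega)
    rw [this]
    simp [div_nonneg]

/-- A consequence of the LYM inequality: an antichain of subsets of a `u`-element set,
all of cardinality at most `v`, has at most `max_{0 ≤ i ≤ v} C(u, i)` members. -/
theorem antichain_card_le {α : Type*} [DecidableEq α] (U : Finset α)
    (𝒜 : Finset (Finset α)) (v : ℕ)
    (hsub : ∀ A ∈ 𝒜, A ⊆ U)
    (hanti : IsAntichain (· ⊆ ·) (𝒜 : Set (Finset α)))
    (hcard : ∀ A ∈ 𝒜, A.card ≤ v) :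
    𝒜.card ≤ (Finset.range (v + 1)).sup fun i => U.card.choose i := by
  classical
  set f : Finset α → Finset {x // x ∈ U} := fun A => A.subtype (· ∈ U) with hf
  have hfm : ∀ A, A ⊆ U → (f A).map (Function.Embedding.subtype _) = A := by
    intro A hA
    rw [hf]
    rw [Finset.subtype_map]
    exact Finset.filter_true_of_mem fun x hx => hA hx
  set 𝒜' : Finset (Finset {x // x ∈ U}) := 𝒜.image f with h𝒜'
  have hinj : ∀ A ∈ 𝒜, ∀ B ∈ 𝒜, f A = f B → A = B := by
    intro A hA B hB h
    rw [← hfm A (hsub A hA), ← hfm B (hsub B hB), h]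
  have hcard' : 𝒜'.card = 𝒜.card := Finset.card_image_of_injOn hinj
  have hanti' : IsAntichain (· ⊆ ·) (𝒜' : Set (Finset {x // x ∈ U})) := by
    rintro _ hA _ hB hne hAB
    simp only [h𝒜', coe_image, Set.mem_image, mem_coe] at hA hB
    obtain ⟨A, hA, rfl⟩ := hA
    obtain ⟨B, hB, rfl⟩ := hB
    refine hanti hA hB (fun h => hne (by rw [h])) ?_
    rw [← hfm A (hsub A hA), ← hfm B (hsub B hB)]
    exact Finset.map_subset_map.2 hAB
  have hcards : ∀ A' ∈ 𝒜', A'.card ≤ v := by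
    intro A' hA'
    simp only [h𝒜', mem_image] at hA'
    obtain ⟨A, hA, rfl⟩ := hA'
    have : (f A).card = A.card := by
      conv_rhs => rw [← hfm A (hsub A hA)]
      rw [Finset.card_map]
    rw [this]
    exact hcard A hA
  have := antichain_card_le_aux 𝒜' v hanti' hcards
  rwa [hcard', Fintype.card_coe] at this
end

section
/- For all positive integers v and M with M ≥ v + 1: the sum over k from 1 to M of max_{0 ≤ i ≤ v} C(2k, i) is at most 2^v · (M+2)^{v+1} / (v+1)!, where C(2k,i) is the binomial coefficient 2k choose i. -/
/-- Binomial-type inequality: `n^(m+1) + (m+1) n^m ≤ (n+1)^(m+1)`. -/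
lemma aux_pow_succ_ge (n : ℕ) : ∀ m : ℕ, n ^ (m + 1) + (m + 1) * n ^ m ≤ (n + 1) ^ (m + 1) := by
  intro m
  induction m with
  | zero => simp
  | succ m ih =>
    have h : (n + 1) ^ (m + 1 + 1) = (n + 1) * (n + 1) ^ (m + 1) := by ring
    rw [h]
    calc n ^ (m + 1 + 1) + (m + 1 + 1) * n ^ (m + 1)
        = n * (n ^ (m + 1) + (m + 1) * n ^ m) + n ^ (m + 1) := by ring
      _ ≤ n * (n + 1) ^ (m + 1) + (n + 1) ^ (m + 1) :=
          Nat.add_le_add (Nat.mul_le_mul_left _ ih)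
            (Nat.pow_le_pow_left (Nat.le_succ n) _)
      _ = (n + 1) * (n + 1) ^ (m + 1) := by ring

/-- sum of `k^v` bound: `(v+1) * ∑_{k < N} k^v ≤ N^(v+1)`. -/
lemma aux_sum_pow_le (v : ℕ) : ∀ N : ℕ, (v + 1) * ∑ k ∈ Finset.range N, k ^ v ≤ N ^ (v + 1) := by
  intro N
  induction N with
  | zero => simp
  | succ N ih =>
    rw [Finset.sum_range_succ, Nat.mul_add]
    calc (v + 1) * ∑ k ∈ Finset.range N, k ^ v + (v + 1) * N ^ v
        ≤ N ^ (v + 1) + (v + 1) * N ^ v := by exact Nat.add_le_add_right ih _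
      _ ≤ (N + 1) ^ (v + 1) := aux_pow_succ_ge N v

lemma aux_geom (v : ℕ) : 3 * (∑ k ∈ Finset.Icc 1 v, 4 ^ k) + 4 = 4 ^ (v + 1) := by
  induction v with
  | zero => simp
  | succ v ih =>
    rw [Finset.sum_Icc_succ_top (by omega : 1 ≤ v + 1), Nat.mul_add]
    have : 4 ^ (v + 1 + 1) = 4 ^ (v + 1) + 3 * 4 ^ (v + 1) := by ring
    omega

lemma aux_two_pow_fact (v : ℕ) : 2 ^ v * Nat.factorial v ≤ (v + 1) ^ v := by
  induction v with
  | zero => simp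
  | succ v ih =>
    have h1 : 2 ^ (v + 1) * Nat.factorial (v + 1) = 2 * (v + 1) * (2 ^ v * Nat.factorial v) := by
      rw [Nat.factorial_succ]; ring
    rw [h1]
    calc 2 * (v + 1) * (2 ^ v * Nat.factorial v) ≤ 2 * (v + 1) * (v + 1) ^ v :=
          Nat.mul_le_mul_left _ ih
      _ = (v + 1) ^ (v + 1) + (v + 1) * (v + 1) ^ v := by ring
      _ ≤ (v + 2) ^ (v + 1) := aux_pow_succ_ge (v + 1) v

lemma aux_four_three (v : ℕ) (hv : 1 ≤ v) : 4 * (v + 1) ^ v ≤ 3 * (v + 2) ^ v := by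
  obtain ⟨w, rfl⟩ := Nat.exists_eq_succ_of_ne_zero (by omega : v ≠ 0)
  have h := aux_pow_succ_ge (w + 2) w
  show 4 * (w + 2) ^ (w + 1) ≤ 3 * (w + 3) ^ (w + 1)
  calc 4 * (w + 2) ^ (w + 1)
      = 3 * (w + 2) ^ (w + 1) + (w + 2) * (w + 2) ^ w := by ring
    _ ≤ 3 * (w + 2) ^ (w + 1) + 3 * (w + 1) * (w + 2) ^ w :=
        Nat.add_le_add_left (Nat.mul_le_mul_right _ (by omega)) _
    _ = 3 * ((w + 2) ^ (w + 1) + (w + 1) * (w + 2) ^ w) := by ring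
    _ ≤ 3 * (w + 3) ^ (w + 1) := Nat.mul_le_mul_left _ h

/-- monotonicity of binomial coefficients below the middle. -/
lemma aux_choose_mono_half {n i j : ℕ} (hij : i ≤ j) (hj : j ≤ n / 2) :
    n.choose i ≤ n.choose j := by
  induction j, hij using Nat.le_induction with
  | base => exact le_rfl
  | succ j hij ih =>
    exact (ih (le_trans (Nat.le_succ j) hj)).trans
      (Nat.choose_le_succ_of_lt_half_left (Nat.lt_of_succ_le hj))

lemma aux_choose_le_two_pow (n i : ℕ) : n.choose i ≤ 2 ^ n := by
  rcases le_or_gt i n with h | h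
  · calc n.choose i ≤ ∑ m ∈ Finset.range (n + 1), n.choose m :=
        Finset.single_le_sum (fun m _ => Nat.zero_le _) (Finset.mem_range.2 (by omega))
      _ = 2 ^ n := Nat.sum_range_choose n
  · rw [Nat.choose_eq_zero_of_lt h]; exact Nat.zero_le _

/-- The main inequality in natural numbers. -/
lemma aux_main_nat (v M : ℕ) (hv : 1 ≤ v) (hM : v + 1 ≤ M) :
    Nat.factorial (v + 1) *
      ∑ k ∈ Finset.Icc 1 M, (Finset.range (v + 1)).sup (fun i => (2 * k).choose i) ≤
      2 ^ v * (M + 2) ^ (v + 1) := by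
  set f : ℕ → ℕ := fun k => (Finset.range (v + 1)).sup (fun i => (2 * k).choose i) with hf
  have hsplit : ∑ k ∈ Finset.Icc 1 M, f k
      = (∑ k ∈ Finset.Icc 1 v, f k) + ∑ k ∈ Finset.Ioc v M, f k := by
    have e : ∀ n : ℕ, Finset.Icc 1 n = Finset.Ioc 0 n := fun n => by
      rw [← Finset.Icc_add_one_left_eq_Ioc]; rfl
    rw [e M, e v]
    exact (Finset.sum_Ioc_consecutive _ (Nat.zero_le v) (by omega)).symm
  -- part 1 : small k
  have hpart1 : Nat.factorial (v + 1) * ∑ k ∈ Finset.Icc 1 v, f k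
      ≤ 2 ^ v * ((v + 1) * (M + 1) ^ v) := by
    have hfk : ∀ k ∈ Finset.Icc 1 v, f k ≤ 4 ^ k := by
      intro k _
      apply Finset.sup_le
      intro i _
      calc (2 * k).choose i ≤ 2 ^ (2 * k) := aux_choose_le_two_pow _ _
        _ = 4 ^ k := by rw [pow_mul]; norm_num
    have h1 : ∑ k ∈ Finset.Icc 1 v, f k ≤ ∑ k ∈ Finset.Icc 1 v, 4 ^ k :=
      Finset.sum_le_sum hfk
    -- 3 * (v+1)! * geom ≤ (v+1)! * 4^(v+1) ≤ 3 * 2^v * (v+1) * (v+2)^v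
    have h2 : Nat.factorial (v + 1) * 4 ^ (v + 1) ≤ 3 * (2 ^ v * ((v + 1) * (v + 2) ^ v)) := by
      have e1 : Nat.factorial (v + 1) * 4 ^ (v + 1)
          = 4 * (v + 1) * (2 ^ v * Nat.factorial v) * 2 ^ v := by
        rw [Nat.factorial_succ]
        have : (4 : ℕ) ^ (v + 1) = 4 * (2 ^ v * 2 ^ v) := by
          rw [show (4:ℕ) = 2^2 by norm_num, ← pow_mul]
          ring
        rw [this]; ring
      rw [e1]
      calc 4 * (v + 1) * (2 ^ v * Nat.factorial v) * 2 ^ v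
          ≤ 4 * (v + 1) * (v + 1) ^ v * 2 ^ v := by
            apply Nat.mul_le_mul_right
            exact Nat.mul_le_mul_left _ (aux_two_pow_fact v)
        _ = (v + 1) * (4 * (v + 1) ^ v) * 2 ^ v := by ring
        _ ≤ (v + 1) * (3 * (v + 2) ^ v) * 2 ^ v := by
            apply Nat.mul_le_mul_right
            exact Nat.mul_le_mul_left _ (aux_four_three v hv)
        _ = 3 * (2 ^ v * ((v + 1) * (v + 2) ^ v)) := by ring
    have hgeom := aux_geom v
    have h3 : 3 * (Nat.factorial (v + 1) * ∑ k ∈ Finset.Icc 1 v, f k)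
        ≤ 3 * (2 ^ v * ((v + 1) * (v + 2) ^ v)) := by
      calc 3 * (Nat.factorial (v + 1) * ∑ k ∈ Finset.Icc 1 v, f k)
          ≤ 3 * (Nat.factorial (v + 1) * ∑ k ∈ Finset.Icc 1 v, 4 ^ k) := by
            exact Nat.mul_le_mul_left _ (Nat.mul_le_mul_left _ h1)
        _ = Nat.factorial (v + 1) * (3 * ∑ k ∈ Finset.Icc 1 v, 4 ^ k) := by ring
        _ ≤ Nat.factorial (v + 1) * 4 ^ (v + 1) := by
            apply Nat.mul_le_mul_left; omega
        _ ≤ 3 * (2 ^ v * ((v + 1) * (v + 2) ^ v)) := h2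
    have h4 : Nat.factorial (v + 1) * ∑ k ∈ Finset.Icc 1 v, f k
        ≤ 2 ^ v * ((v + 1) * (v + 2) ^ v) := by omega
    calc Nat.factorial (v + 1) * ∑ k ∈ Finset.Icc 1 v, f k
        ≤ 2 ^ v * ((v + 1) * (v + 2) ^ v) := h4
      _ ≤ 2 ^ v * ((v + 1) * (M + 1) ^ v) := by
          apply Nat.mul_le_mul_left
          apply Nat.mul_le_mul_left
          exact Nat.pow_le_pow_left (by omega) v
  -- part 2 : large k
  have hpart2 : Nat.factorial (v + 1) * ∑ k ∈ Finset.Ioc v M, f k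
      ≤ 2 ^ v * (M + 1) ^ (v + 1) := by
    have hfk : ∀ k ∈ Finset.Ioc v M, Nat.factorial v * f k ≤ 2 ^ v * k ^ v := by
      intro k hk
      rw [Finset.mem_Ioc] at hk
      have hsup : f k ≤ (2 * k).choose v := by
        apply Finset.sup_le
        intro i hi
        rw [Finset.mem_range] at hi
        apply aux_choose_mono_half (by omega)
        omega
      calc Nat.factorial v * f k ≤ Nat.factorial v * (2 * k).choose v :=
            Nat.mul_le_mul_left _ hsup
        _ = (2 * k).descFactorial v := (Nat.descFactorial_eq_factorial_mul_choose _ _).symm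
        _ ≤ (2 * k) ^ v := Nat.descFactorial_le_pow _ _
        _ = 2 ^ v * k ^ v := by rw [mul_pow]
    calc Nat.factorial (v + 1) * ∑ k ∈ Finset.Ioc v M, f k
        = (v + 1) * ∑ k ∈ Finset.Ioc v M, Nat.factorial v * f k := by
          rw [Nat.factorial_succ, mul_assoc, Finset.mul_sum]
      _ ≤ (v + 1) * ∑ k ∈ Finset.Ioc v M, 2 ^ v * k ^ v :=
          Nat.mul_le_mul_left _ (Finset.sum_le_sum hfk)
      _ = 2 ^ v * ((v + 1) * ∑ k ∈ Finset.Ioc v M, k ^ v) := by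
          rw [← Finset.mul_sum]; ring
      _ ≤ 2 ^ v * ((v + 1) * ∑ k ∈ Finset.range (M + 1), k ^ v) := by
          apply Nat.mul_le_mul_left
          apply Nat.mul_le_mul_left
          apply Finset.sum_le_sum_of_subset
          intro x hx
          rw [Finset.mem_Ioc] at hx
          rw [Finset.mem_range]
          omega
      _ ≤ 2 ^ v * (M + 1) ^ (v + 1) := Nat.mul_le_mul_left _ (aux_sum_pow_le v (M + 1))
  rw [hsplit, Nat.mul_add]
  calc Nat.factorial (v + 1) * ∑ k ∈ Finset.Icc 1 v, f k +
        Nat.factorial (v + 1) * ∑ k ∈ Finset.Ioc v M, f k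
      ≤ 2 ^ v * ((v + 1) * (M + 1) ^ v) + 2 ^ v * (M + 1) ^ (v + 1) :=
        Nat.add_le_add hpart1 hpart2
    _ = 2 ^ v * ((M + 1) ^ (v + 1) + (v + 1) * (M + 1) ^ v) := by ring
    _ ≤ 2 ^ v * (M + 2) ^ (v + 1) := Nat.mul_le_mul_left _ (aux_pow_succ_ge (M + 1) v)

/-- For `v ≥ 1` and `M ≥ v + 1`,
`∑_{k=1}^{M} max_{0 ≤ i ≤ v} C(2k, i) ≤ 2^v (M+2)^{v+1} / (v+1)!`. -/
theorem sum_max_binom_le_of_large (v M : ℕ) (hv : 1 ≤ v) (hM : v + 1 ≤ M) :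
    (∑ k ∈ Finset.Icc 1 M,
        (((Finset.range (v + 1)).sup fun i => (2 * k).choose i : ℕ) : ℝ)) ≤
      2 ^ v * ((M : ℝ) + 2) ^ (v + 1) / (Nat.factorial (v + 1) : ℝ) := by
  rw [le_div_iff₀ (by positivity : (0:ℝ) < (Nat.factorial (v + 1) : ℝ))]
  have h := aux_main_nat v M hv hM
  have : ((Nat.factorial (v + 1) *
      ∑ k ∈ Finset.Icc 1 M, (Finset.range (v + 1)).sup (fun i => (2 * k).choose i) : ℕ) : ℝ)
      ≤ ((2 ^ v * (M + 2) ^ (v + 1) : ℕ) : ℝ) := by exact_mod_cast h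
  push_cast at this
  linarith
end

section
/- Let n, r, d, M be positive integers with r ≤ n/2. If the sum over k from 1 to M+1 of max_{0 ≤ i ≤ rd} C(2k, i) is strictly greater than C(n, r), then M + 3 ≥ ((rd+1)/(2e)) · ( C(n,r)^{1/(rd+1)} − 1 ), where C(m,i) denotes the binomial coefficient m choose i and e is Euler's number. -/
/-- `choose` is monotone in the lower index up to the middle. -/
lemma aux_choose_mono_half_s14 (n : ℕ) : ∀ b a : ℕ, a ≤ b → b ≤ n / 2 →
    n.choose a ≤ n.choose b := by
  intro b
  induction b with
  | zero => intro a ha _; interval_cases a; rfl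
  | succ b ih =>
    intro a ha hb
    rcases Nat.eq_or_lt_of_le ha with rfl | h'
    · rfl
    · exact le_trans (ih a (by omega) (by omega))
        (Nat.choose_le_succ_of_lt_half_left (by omega))

/-- Weak hockey-stick inequality. -/
lemma aux_hockey (j : ℕ) : ∀ N : ℕ, ∑ m ∈ Finset.range N, m.choose j ≤ N.choose (j + 1) := by
  intro N
  induction N with
  | zero => simp
  | succ N ih =>
    rw [Finset.sum_range_succ]
    have hps := Nat.choose_succ_succ N j
    simp only [Nat.succ_eq_add_one] at hps
    omega

/-- Geometric sum bound. -/
lemma aux_geom_s14 : ∀ N : ℕ, ∑ k ∈ Finset.range N, 4 ^ k ≤ 4 ^ N := by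
  intro N
  induction N with
  | zero => simp
  | succ N ih =>
    rw [Finset.sum_range_succ, pow_succ]
    omega

/-- `s^s ≤ s! * e^(s-1)`. -/
lemma aux_fact (s : ℕ) (hs : 1 ≤ s) :
    (s : ℝ) ^ s ≤ (s.factorial : ℝ) * Real.exp 1 ^ (s - 1) := by
  induction s with
  | zero => omega
  | succ s ih =>
    rcases Nat.eq_or_lt_of_le hs with h1 | h1
    · simp [← h1]
    · have hs1 : 1 ≤ s := by omega
      have ihs := ih hs1
      have hspos : (0 : ℝ) < s := by exact_mod_cast hs1
      have hstep : ((s : ℝ) + 1) ^ s ≤ (s : ℝ) ^ s * Real.exp 1 := by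
        have h2 : ((s : ℝ) + 1) = (s : ℝ) * (1 + 1 / s) := by field_simp
        have h3 : (1 + 1 / (s : ℝ)) ^ s ≤ Real.exp 1 := by
          have h4 : (1 + 1 / (s : ℝ)) ≤ Real.exp (1 / s) := by
            have := Real.add_one_le_exp (1 / (s : ℝ)); linarith
          calc (1 + 1 / (s : ℝ)) ^ s ≤ Real.exp (1 / s) ^ s := by
                apply pow_le_pow_left₀ (by positivity) h4
          _ = Real.exp ((s : ℝ) * (1 / s)) := (Real.exp_nat_mul _ s).symm
          _ = Real.exp 1 := by rw [mul_one_div, div_self (ne_of_gt hspos)]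
        calc ((s : ℝ) + 1) ^ s = (s : ℝ) ^ s * (1 + 1 / s) ^ s := by
              rw [h2, mul_pow]
        _ ≤ (s : ℝ) ^ s * Real.exp 1 := by
              apply mul_le_mul_of_nonneg_left h3 (by positivity)
      have hfin : ((s : ℝ) + 1) ^ (s + 1) ≤ ((s + 1).factorial : ℝ) * Real.exp 1 ^ s := by
        have he : Real.exp 1 ^ s = Real.exp 1 ^ (s - 1) * Real.exp 1 := by
          rw [← pow_succ]; congr 1; omega
        calc ((s : ℝ) + 1) ^ (s + 1) = ((s : ℝ) + 1) ^ s * ((s : ℝ) + 1) := by ring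
        _ ≤ ((s : ℝ) ^ s * Real.exp 1) * ((s : ℝ) + 1) := by
              apply mul_le_mul_of_nonneg_right hstep (by positivity)
        _ ≤ (((s.factorial : ℝ) * Real.exp 1 ^ (s - 1)) * Real.exp 1) * ((s : ℝ) + 1) := by
              have hepos : (0 : ℝ) < Real.exp 1 := Real.exp_pos 1
              apply mul_le_mul_of_nonneg_right _ (by positivity)
              apply mul_le_mul_of_nonneg_right ihs hepos.le
        _ = ((s + 1).factorial : ℝ) * Real.exp 1 ^ s := by
              rw [Nat.factorial_succ, he]; push_cast; ring
      simp only [Nat.add_sub_cancel]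
      push_cast
      exact hfin

set_option maxHeartbeats 1000000 in
/-- If `∑_{k=1}^{M+1} max_{0 ≤ i ≤ rd} C(2k, i) > C(n, r)`, then
`M + 3 ≥ ((rd+1)/(2e)) (C(n,r)^{1/(rd+1)} − 1)`. -/
theorem M_lower_bound (n r d M : ℕ) (hr : 1 ≤ r) (hd : 1 ≤ d) (hM : 1 ≤ M)
    (hrn : 2 * r ≤ n)
    (h : n.choose r <
      ∑ k ∈ Finset.Icc 1 (M + 1),
        (Finset.range (r * d + 1)).sup fun i => (2 * k).choose i) :
    (M : ℝ) + 3 ≥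
      ((r * d + 1 : ℝ) / (2 * Real.exp 1)) *
        ((n.choose r : ℝ) ^ (1 / (r * d + 1 : ℝ)) - 1) := by
  have hrd : 1 ≤ r * d := Nat.one_le_iff_ne_zero.mpr (by positivity)
  set s : ℕ := r * d + 1 with hs_def
  have hs2 : 2 ≤ s := by omega
  set E : ℝ := Real.exp 1 with hE_def
  have hE : (2.7 : ℝ) < E := lt_trans (by norm_num) Real.exp_one_gt_d9
  have hEpos : (0 : ℝ) < E := by linarith
  have hspos : (0 : ℝ) < (s : ℝ) := by exact_mod_cast Nat.lt_of_lt_of_le Nat.zero_lt_two hs2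
  set t : ℝ := 2 * E * ((M : ℝ) + 3) / (s : ℝ) with ht_def
  have htpos : 0 < t := by
    apply div_pos (by positivity) hspos
  -- pointwise bounds on the sup
  have hsup4 : ∀ k : ℕ, ((Finset.range s).sup fun i => (2 * k).choose i) ≤ 4 ^ k := by
    intro k
    apply Finset.sup_le
    intro i _
    calc (2 * k).choose i ≤ 2 ^ (2 * k) := aux_choose_le_two_pow _ _
    _ = 4 ^ k := by rw [pow_mul]; norm_num
  have hsupc : ∀ k : ℕ, s - 1 ≤ k →
      ((Finset.range s).sup fun i => (2 * k).choose i) ≤ (2 * k).choose (s - 1) := by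
    intro k hk
    apply Finset.sup_le
    intro i hi
    have hi' : i ≤ s - 1 := by have := Finset.mem_range.mp hi; omega
    exact aux_choose_mono_half_s14 (2 * k) (s - 1) i hi' (by omega)
  -- key real inequality
  have hkey : (n.choose r : ℝ) ≤ (1 + t) ^ s := by
    by_cases hcase : s ≤ M + 2
    · -- case B : s small
      have ht2E : 2 * E ≤ t := by
        rw [ht_def, le_div_iff₀ hspos]
        have hsM : (s : ℝ) ≤ (M : ℝ) + 3 := by
          have : (s : ℕ) ≤ M + 3 := by omega
          exact_mod_cast this
        nlinarith
      have h4t : (4 : ℝ) ≤ 1 + t := by nlinarith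
      -- natural number bound
      have hnatB : n.choose r ≤ 4 ^ (s - 1) + (2 * M + 3).choose s := by
        have hstep : (∑ k ∈ Finset.Icc 1 (M + 1),
            (Finset.range s).sup fun i => (2 * k).choose i) ≤
            4 ^ (s - 1) + (2 * M + 3).choose s := by
          have hpt : (∑ k ∈ Finset.Icc 1 (M + 1),
              (Finset.range s).sup fun i => (2 * k).choose i) ≤
              ∑ k ∈ Finset.Icc 1 (M + 1),
                ((if k + 1 < s then 4 ^ k else 0) +
                 (if k + 1 < s then 0 else (2 * k).choose (s - 1))) := by
            apply Finset.sum_le_sum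
            intro k _
            split_ifs with hks
            · simpa using hsup4 k
            · simpa using hsupc k (by omega)
          rw [Finset.sum_add_distrib] at hpt
          have hpart1 : (∑ k ∈ Finset.Icc 1 (M + 1), if k + 1 < s then 4 ^ k else 0) ≤
              4 ^ (s - 1) := by
            rw [← Finset.sum_filter]
            calc (∑ k ∈ (Finset.Icc 1 (M + 1)).filter (fun k => k + 1 < s), 4 ^ k) ≤
                ∑ k ∈ Finset.range (s - 1), 4 ^ k := by
                  apply Finset.sum_le_sum_of_subset
                  intro x hx
                  simp only [Finset.mem_filter, Finset.mem_Icc] at hx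
                  exact Finset.mem_range.mpr (by omega)
            _ ≤ 4 ^ (s - 1) := aux_geom_s14 _
          have hpart2 : (∑ k ∈ Finset.Icc 1 (M + 1),
              if k + 1 < s then 0 else (2 * k).choose (s - 1)) ≤
              (2 * M + 3).choose s := by
            calc (∑ k ∈ Finset.Icc 1 (M + 1),
                  if k + 1 < s then 0 else (2 * k).choose (s - 1)) ≤
                ∑ k ∈ Finset.Icc 1 (M + 1), (2 * k).choose (s - 1) := by
                  apply Finset.sum_le_sum
                  intro k _
                  split_ifs <;> simp
            _ = ∑ m ∈ (Finset.Icc 1 (M + 1)).image (fun k => 2 * k), m.choose (s - 1) := by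
                  rw [Finset.sum_image]
                  intro x _ y _ hxy
                  simp only at hxy
                  omega
            _ ≤ ∑ m ∈ Finset.range (2 * M + 3), m.choose (s - 1) := by
                  apply Finset.sum_le_sum_of_subset
                  intro m hm
                  simp only [Finset.mem_image, Finset.mem_Icc] at hm
                  obtain ⟨k, hk, rfl⟩ := hm
                  exact Finset.mem_range.mpr (by omega)
            _ ≤ (2 * M + 3).choose (s - 1 + 1) := aux_hockey _ _
            _ = (2 * M + 3).choose s := by
                  rw [Nat.sub_add_cancel (by omega : 1 ≤ s)]
          omega
        omega
      -- transfer to reals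
      have hnatBR : (n.choose r : ℝ) ≤ (4 : ℝ) ^ (s - 1) + ((2 * M + 3).choose s : ℝ) := by
        exact_mod_cast hnatB
      have hXpos : (0 : ℝ) < (1 + t) ^ s := by positivity
      -- bound the 4^(s-1) term
      have hb1 : (4 : ℝ) ^ (s - 1) ≤ (1 + t) ^ s / (1 + 2 * E) := by
        have h1 : (4 : ℝ) ^ (s - 1) ≤ (1 + t) ^ (s - 1) :=
          pow_le_pow_left₀ (by norm_num) h4t _
        have h2 : (1 + t) ^ (s - 1) * (1 + 2 * E) ≤ (1 + t) ^ s := by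
          have h2a : (1 + t) ^ (s - 1) * (1 + 2 * E) ≤ (1 + t) ^ (s - 1) * (1 + t) := by
            have hXp : (0:ℝ) ≤ (1 + t) ^ (s - 1) := by positivity
            nlinarith
          have h2b : (1 + t) ^ (s - 1) * (1 + t) = (1 + t) ^ s := by
            rw [← pow_succ, Nat.sub_add_cancel (by omega : 1 ≤ s)]
          linarith [h2a, h2b.le, h2b.ge]
        rw [le_div_iff₀ (by linarith)]
        have h1' : (4 : ℝ) ^ (s - 1) * (1 + 2 * E) ≤ (1 + t) ^ (s - 1) * (1 + 2 * E) := by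
          have hnn : (0:ℝ) ≤ 1 + 2 * E := by linarith
          exact mul_le_mul_of_nonneg_right h1 hnn
        linarith
      -- bound the choose term
      have hb2 : ((2 * M + 3).choose s : ℝ) ≤ (1 + t) ^ s / E := by
        have hc1 : ((2 * M + 3).choose s : ℝ) ≤ ((2 * M + 3 : ℕ) : ℝ) ^ s / s.factorial :=
          Nat.choose_le_pow_div s (2 * M + 3)
        have hfacpos : (0 : ℝ) < (s.factorial : ℝ) := by exact_mod_cast s.factorial_pos
        have hfac := aux_fact s (by omega)
        rw [← hE_def] at hfac
        -- (2M+3)^s / s! ≤ (2(M+3))^s * E^(s-1) / s^s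
        have hc2 : ((2 * M + 3 : ℕ) : ℝ) ^ s / s.factorial ≤
            (2 * ((M : ℝ) + 3)) ^ s * E ^ (s - 1) / (s : ℝ) ^ s := by
          rw [div_le_div_iff₀ hfacpos (by positivity)]
          calc ((2 * M + 3 : ℕ) : ℝ) ^ s * (s : ℝ) ^ s ≤
              (2 * ((M : ℝ) + 3)) ^ s * ((s.factorial : ℝ) * E ^ (s - 1)) := by
                apply mul_le_mul
                · apply pow_le_pow_left₀ (by positivity)
                  push_cast; linarith
                · exact hfac
                · positivity
                · positivity
          _ = (2 * ((M : ℝ) + 3)) ^ s * E ^ (s - 1) * (s.factorial : ℝ) := by ring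
        -- (2(M+3))^s * E^(s-1) / s^s = t^s / E
        have hc3 : (2 * ((M : ℝ) + 3)) ^ s * E ^ (s - 1) / (s : ℝ) ^ s = t ^ s / E := by
          have hEs : E ^ s = E ^ (s - 1) * E := by
            rw [← pow_succ, Nat.sub_add_cancel (by omega : 1 ≤ s)]
          rw [ht_def, div_pow, mul_pow, mul_pow, mul_pow, hEs]
          field_simp
        have hc4 : t ^ s ≤ (1 + t) ^ s := pow_le_pow_left₀ htpos.le (by linarith) _
        calc ((2 * M + 3).choose s : ℝ) ≤ ((2 * M + 3 : ℕ) : ℝ) ^ s / s.factorial := hc1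
        _ ≤ (2 * ((M : ℝ) + 3)) ^ s * E ^ (s - 1) / (s : ℝ) ^ s := hc2
        _ = t ^ s / E := hc3
        _ ≤ (1 + t) ^ s / E := by gcongr
      -- combine
      have hsum : (1 + t) ^ s / (1 + 2 * E) + (1 + t) ^ s / E ≤ (1 + t) ^ s := by
        have hcoef : 1 / (1 + 2 * E) + 1 / E ≤ 1 := by
          rw [div_add_div _ _ (by linarith : (1 + 2 * E) ≠ 0) (ne_of_gt hEpos),
            div_le_one (by positivity)]
          nlinarith
        calc (1 + t) ^ s / (1 + 2 * E) + (1 + t) ^ s / E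
            = (1 + t) ^ s * (1 / (1 + 2 * E) + 1 / E) := by ring
        _ ≤ (1 + t) ^ s * 1 := mul_le_mul_of_nonneg_left hcoef hXpos.le
        _ = (1 + t) ^ s := mul_one _
      linarith [hnatBR, hb1, hb2, hsum]
    · -- case A : s large
      push_neg at hcase
      have hnatA : n.choose r ≤ 4 ^ (M + 2) := by
        have hstep : (∑ k ∈ Finset.Icc 1 (M + 1),
            (Finset.range s).sup fun i => (2 * k).choose i) ≤
            ∑ k ∈ Finset.Icc 1 (M + 1), 4 ^ k :=
          Finset.sum_le_sum fun k _ => hsup4 k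
        have hstep2 : (∑ k ∈ Finset.Icc 1 (M + 1), 4 ^ k) ≤
            ∑ k ∈ Finset.range (M + 2), 4 ^ k := by
          apply Finset.sum_le_sum_of_subset
          intro x hx
          simp only [Finset.mem_Icc] at hx
          exact Finset.mem_range.mpr (by omega)
        have := aux_geom_s14 (M + 2)
        omega
      have hnatAR : (n.choose r : ℝ) ≤ (4 : ℝ) ^ (M + 2) := by exact_mod_cast hnatA
      have hMs : ((M : ℝ) + 2) ≤ (s : ℝ) := by
        have : (M + 2 : ℕ) ≤ s := by omega
        exact_mod_cast this
      have hM2pos : (0 : ℝ) < (M : ℝ) + 2 := by positivity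
      set p : ℝ := (s : ℝ) / ((M : ℝ) + 2) with hp_def
      have hp1 : 1 ≤ p := (one_le_div hM2pos).mpr hMs
      have hbern : 1 + 2 * E ≤ (1 + t) ^ (p : ℝ) := by
        have hb := one_add_mul_self_le_rpow_one_add (by linarith : (-1 : ℝ) ≤ t) hp1
        have hpt : 2 * E ≤ p * t := by
          have : p * t = 2 * E * (((M : ℝ) + 3) / ((M : ℝ) + 2)) := by
            rw [hp_def, ht_def]
            field_simp
          rw [this]
          have h1 : (1 : ℝ) ≤ ((M : ℝ) + 3) / ((M : ℝ) + 2) := by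
            rw [le_div_iff₀ hM2pos]; linarith
          nlinarith
        linarith
      have hA : (4 : ℝ) ^ (M + 2) ≤ (1 + t) ^ s := by
        have h1 : (4 : ℝ) ^ (M + 2) ≤ (1 + 2 * E) ^ (M + 2) :=
          pow_le_pow_left₀ (by norm_num) (by linarith) _
        have h2 : (1 + 2 * E) ^ (M + 2) ≤ ((1 + t) ^ (p : ℝ)) ^ (M + 2) :=
          pow_le_pow_left₀ (by linarith) hbern _
        have h3 : ((1 + t) ^ (p : ℝ)) ^ (M + 2) = (1 + t) ^ s := by
          rw [← Real.rpow_natCast ((1 + t) ^ (p : ℝ)) (M + 2), ← Real.rpow_mul (by linarith)]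
          have hps : p * ((M + 2 : ℕ) : ℝ) = (s : ℝ) := by
            rw [hp_def]
            push_cast
            field_simp
          rw [hps, Real.rpow_natCast]
        linarith
      linarith
  -- conclude
  have hC0 : (0 : ℝ) ≤ (n.choose r : ℝ) := Nat.cast_nonneg _
  have h1t : (0 : ℝ) ≤ 1 + t := by linarith
  have hroot : (n.choose r : ℝ) ^ (1 / (s : ℝ)) ≤ 1 + t := by
    calc (n.choose r : ℝ) ^ (1 / (s : ℝ)) ≤ ((1 + t) ^ s) ^ (1 / (s : ℝ)) :=
        Real.rpow_le_rpow hC0 hkey (by positivity)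
    _ = 1 + t := by
        rw [← Real.rpow_natCast (1 + t) s, ← Real.rpow_mul h1t, mul_one_div,
          div_self (ne_of_gt hspos), Real.rpow_one]
  have hsr : ((r : ℝ) * (d : ℝ) + 1) = (s : ℝ) := by rw [hs_def]; push_cast; ring
  rw [ge_iff_le, hsr]
  calc (s : ℝ) / (2 * E) * ((n.choose r : ℝ) ^ (1 / (s : ℝ)) - 1) ≤
      (s : ℝ) / (2 * E) * t := by
        apply mul_le_mul_of_nonneg_left (by linarith) (by positivity)
  _ = (M : ℝ) + 3 := by
        rw [ht_def]
        field_simp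
end
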